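/- arXiv:2407.01382 — 6 statements merged into one kernel-verified Lean document; each statement's English description precedes it below -/
import Mathlib

section
/- Let η₀ be the tournament on [8] defined below, and let the eight brackets be π₁=(1,2,3,4,5,6,7,8), π₂=(2,3,4,1,6,7,8,5), π₃=(3,6,4,1,8,2,5,7), π₄=(4,1,8,2,5,6,7,3), π₅=(5,6,7,8,2,3,4,1), π₆=(6,7,8,5,1,2,3,4), π₇=(7,8,1,2,3,5,6,4), π₈=(8,1,5,6,2,3,7,4). Then for every k ∈ [8], the single-elimination winner satisfies w₃(η₀, π_k) = k; consequently w₃(η₀, Π(3)) = [8], i.e., every candidate in [8] wins the knockout tournament under η₀ for some bracket. -/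
/-- One knockout round: adjacent pairs play and the winners survive. -/
def roundStep (beats : ℕ → ℕ → Bool) : List ℕ → List ℕ
  | a :: b :: rest => (if beats a b then a else b) :: roundStep beats rest
  | l => l

/-- The winner of the single-elimination knockout tournament with bracket `π`
(a list of length `2^n`), pairwise challenges decided by `beats`. -/
def knockWinner (n : ℕ) (beats : ℕ → ℕ → Bool) (π : List ℕ) : ℕ :=
  ((roundStep beats)^[n] π).headI

/-- The arrows of the tournament `η₀` on `{1,…,8}`. -/
def eta0Pairs : List (ℕ × ℕ) :=
  [(1,2),(1,3),(1,5),(2,3),(2,4),(2,6),(2,7),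
   (3,4),(3,5),(3,6),(3,8),(4,1),(4,5),(4,8),
   (5,2),(5,6),(5,7),(6,1),(6,4),(6,7),(6,8),
   (7,1),(7,3),(7,4),(7,8),(8,1),(8,2),(8,5)]

/-- The tournament `η₀` on `{1,…,8}`: `eta0 i j = true` iff `i ▷ j`. -/
def eta0 (i j : ℕ) : Bool := decide ((i, j) ∈ eta0Pairs)



lemma mem_of_mem_roundStep (beats : ℕ → ℕ → Bool) :
    ∀ l x, x ∈ roundStep beats l → x ∈ l
  | a :: b :: rest, x, h => by
    simp only [roundStep, List.mem_cons] at h ⊢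
    rcases h with h | h
    · split at h <;> simp [h]
    · have := mem_of_mem_roundStep beats rest x h
      simp [this]
  | [], x, h => h
  | [a], x, h => h

lemma roundStep_ne_nil (beats : ℕ → ℕ → Bool) :
    ∀ l : List ℕ, l ≠ [] → roundStep beats l ≠ []
  | a :: b :: rest, _ => by simp [roundStep]
  | [a], _ => by simp [roundStep]

lemma headI_mem' : ∀ (l : List ℕ), l ≠ [] → l.headI ∈ l
  | a :: t, _ => List.mem_cons_self
  | [], h => absurd rfl h

lemma winner_mem (beats : ℕ → ℕ → Bool) (n : ℕ) (l : List ℕ) (hl : l ≠ []) :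
    knockWinner n beats l ∈ l := by
  have key : ∀ m (l : List ℕ), l ≠ [] →
      ((roundStep beats)^[m] l ≠ [] ∧ ∀ x ∈ (roundStep beats)^[m] l, x ∈ l) := by
    intro m
    induction m with
    | zero => intro l hl; exact ⟨hl, fun x hx => hx⟩
    | succ m ih =>
      intro l hl
      rw [Function.iterate_succ_apply]
      obtain ⟨h1, h2⟩ := ih (roundStep beats l) (roundStep_ne_nil beats l hl)
      exact ⟨h1, fun x hx => mem_of_mem_roundStep beats l x (h2 x hx)⟩
  obtain ⟨h1, h2⟩ := key n l hl
  unfold knockWinner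
  exact h2 _ (headI_mem' _ h1)

/-- Lemma 1: under `η₀`, each of the eight explicit brackets makes the corresponding
candidate win, and consequently every candidate in `{1,…,8}` is a possible knockout
winner: `w₃(η₀, Π(3)) = [8]`. -/
theorem stmt0 :
    knockWinner 3 eta0 [1,2,3,4,5,6,7,8] = 1 ∧
    knockWinner 3 eta0 [2,3,4,1,6,7,8,5] = 2 ∧
    knockWinner 3 eta0 [3,6,4,1,8,2,5,7] = 3 ∧
    knockWinner 3 eta0 [4,1,8,2,5,6,7,3] = 4 ∧
    knockWinner 3 eta0 [5,6,7,8,2,3,4,1] = 5 ∧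
    knockWinner 3 eta0 [6,7,8,5,1,2,3,4] = 6 ∧
    knockWinner 3 eta0 [7,8,1,2,3,5,6,4] = 7 ∧
    knockWinner 3 eta0 [8,1,5,6,2,3,7,4] = 8 ∧
    {w : ℕ | ∃ π : List ℕ, π.Perm (List.range' 1 8) ∧ knockWinner 3 eta0 π = w}
      = {k : ℕ | k ∈ List.range' 1 8} := by
  refine ⟨by decide, by decide, by decide, by decide, by decide, by decide, by decide, by decide, ?_⟩
  ext w
  simp only [Set.mem_setOf_eq]
  constructor
  · rintro ⟨π, hperm, rfl⟩
    have hne : π ≠ [] := by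
      intro h; subst h; exact absurd hperm.symm (by decide)
    exact hperm.mem_iff.mp (winner_mem eta0 3 π hne)
  · intro hw
    have : List.range' 1 8 = [1,2,3,4,5,6,7,8] := by decide
    rw [this] at hw ⊢
    fin_cases hw
    · exact ⟨[1,2,3,4,5,6,7,8], by decide, by decide⟩
    · exact ⟨[2,3,4,1,6,7,8,5], by decide, by decide⟩
    · exact ⟨[3,6,4,1,8,2,5,7], by decide, by decide⟩
    · exact ⟨[4,1,8,2,5,6,7,3], by decide, by decide⟩
    · exact ⟨[5,6,7,8,2,3,4,1], by decide, by decide⟩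
    · exact ⟨[6,7,8,5,1,2,3,4], by decide, by decide⟩
    · exact ⟨[7,8,1,2,3,5,6,4], by decide, by decide⟩
    · exact ⟨[8,1,5,6,2,3,7,4], by decide, by decide⟩
end

section
/- For every n ≥ 3, the recursively defined tournament η_{n−3} on [2^n] admits every candidate as a possible knockout winner: w_n(η_{n−3}, Π(n)) = [2^n]. -/
/-- The recursively defined tournaments: `eta n` is the tournament `η_n` on
`{1,…,2^(n+3)}`, `eta n i j = true` meaning `i ▷ j`. -/
def eta : ℕ → ℕ → ℕ → Bool
  | 0, i, j => eta0 i j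
  | n+1, i, j =>
    if i ≤ 2^(n+3) ∧ j ≤ 2^(n+3) then eta n i j
    else if 2^(n+3) < i ∧ 2^(n+3) < j then eta n (i - 2^(n+3)) (j - 2^(n+3))
    else if i ≤ 2^(n+3) then decide ((i + j) % 2 = 0)
    else decide ((i + j) % 2 = 1)

/-! ### Auxiliary lemmas -/

theorem roundStep_nil (b : ℕ → ℕ → Bool) : roundStep b [] = [] := rfl
theorem roundStep_single (b : ℕ → ℕ → Bool) (a : ℕ) : roundStep b [a] = [a] := rfl
theorem roundStep_cons (b : ℕ → ℕ → Bool) (a c : ℕ) (rest : List ℕ) :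
    roundStep b (a :: c :: rest) = (if b a c then a else c) :: roundStep b rest := rfl

theorem roundStep_length (b : ℕ → ℕ → Bool) :
    ∀ l : List ℕ, (roundStep b l).length = (l.length + 1) / 2
  | [] => rfl
  | [_] => by simp [roundStep_single]
  | _ :: _ :: rest => by
      rw [roundStep_cons]
      simp only [List.length_cons, roundStep_length b rest]
      omega

theorem roundStep_subset (b : ℕ → ℕ → Bool) :
    ∀ l : List ℕ, ∀ x ∈ roundStep b l, x ∈ l
  | [] => by simp [roundStep_nil]
  | [a] => by simp [roundStep_single]
  | a :: c :: rest => by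
      intro x hx
      rw [roundStep_cons] at hx
      rcases List.mem_cons.1 hx with h | h
      · subst h
        by_cases hb : b a c <;> simp [hb]
      · have := roundStep_subset b rest x h
        simp [this]

theorem roundStep_append (b : ℕ → ℕ → Bool) :
    ∀ l₁ l₂ : List ℕ, l₁.length % 2 = 0 →
      roundStep b (l₁ ++ l₂) = roundStep b l₁ ++ roundStep b l₂
  | [], l₂, _ => by simp [roundStep_nil]
  | [_], _, h => by simp at h
  | a :: c :: rest, l₂, h => by
      have h' : rest.length % 2 = 0 := by simp at h; omega
      simp only [List.cons_append, roundStep_cons, roundStep_append b rest l₂ h']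

theorem roundStep_map (b b' : ℕ → ℕ → Bool) (f : ℕ → ℕ) :
    ∀ l : List ℕ, (∀ a ∈ l, ∀ c ∈ l, b' (f a) (f c) = b a c) →
      roundStep b' (l.map f) = (roundStep b l).map f
  | [], _ => rfl
  | [_], _ => rfl
  | a :: c :: rest, h => by
      have h' : ∀ x ∈ rest, ∀ y ∈ rest, b' (f x) (f y) = b x y := by
        intro x hx y hy
        exact h x (by simp [hx]) y (by simp [hy])
      simp only [List.map_cons, roundStep_cons,
        roundStep_map b b' f rest h', h a (by simp) c (by simp)]
      by_cases hb : b a c <;> simp [hb]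

theorem roundStep_congr (b b' : ℕ → ℕ → Bool) (l : List ℕ)
    (h : ∀ a ∈ l, ∀ c ∈ l, b a c = b' a c) : roundStep b l = roundStep b' l := by
  have := roundStep_map b' b id l (by simpa using h)
  simpa using this

theorem iter_subset (b : ℕ → ℕ → Bool) :
    ∀ n : ℕ, ∀ l : List ℕ, ∀ x ∈ (roundStep b)^[n] l, x ∈ l
  | 0, _, _, hx => hx
  | n+1, l, x, hx => by
      rw [Function.iterate_succ_apply] at hx
      exact roundStep_subset b l x (iter_subset b n (roundStep b l) x hx)

theorem iter_map (b b' : ℕ → ℕ → Bool) (f : ℕ → ℕ) :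
    ∀ n : ℕ, ∀ l : List ℕ, (∀ a ∈ l, ∀ c ∈ l, b' (f a) (f c) = b a c) →
      (roundStep b')^[n] (l.map f) = ((roundStep b)^[n] l).map f
  | 0, _, _ => rfl
  | n+1, l, h => by
      rw [Function.iterate_succ_apply, Function.iterate_succ_apply,
        roundStep_map b b' f l h]
      exact iter_map b b' f n (roundStep b l)
        (fun a ha c hc => h a (roundStep_subset b l a ha) c (roundStep_subset b l c hc))

theorem iter_congr (b b' : ℕ → ℕ → Bool) :
    ∀ n : ℕ, ∀ l : List ℕ, (∀ a ∈ l, ∀ c ∈ l, b a c = b' a c) →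
      (roundStep b)^[n] l = (roundStep b')^[n] l
  | 0, _, _ => rfl
  | n+1, l, h => by
      rw [Function.iterate_succ_apply, Function.iterate_succ_apply,
        roundStep_congr b b' l h]
      exact iter_congr b b' n (roundStep b' l)
        (fun a ha c hc => h a (roundStep_subset b' l a ha) c (roundStep_subset b' l c hc))

theorem iter_singleton (b : ℕ → ℕ → Bool) :
    ∀ n : ℕ, ∀ l : List ℕ, l.length = 2^n → (roundStep b)^[n] l = [knockWinner n b l]
  | 0, l, h => by
      match l, h with
      | [a], _ => rfl
  | n+1, l, h => by
      rw [knockWinner, Function.iterate_succ_apply]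
      have hlen : (roundStep b l).length = 2^n := by
        rw [roundStep_length, h, pow_succ]; omega
      rw [← Function.iterate_succ_apply, Function.iterate_succ_apply,
        iter_singleton b n (roundStep b l) hlen]
      rfl

theorem iter_append (b : ℕ → ℕ → Bool) :
    ∀ n : ℕ, ∀ l₁ l₂ : List ℕ, l₁.length = 2^n →
      (roundStep b)^[n] (l₁ ++ l₂) = (roundStep b)^[n] l₁ ++ (roundStep b)^[n] l₂
  | 0, _, _, _ => rfl
  | n+1, l₁, l₂, h => by
      have he : l₁.length % 2 = 0 := by rw [h, pow_succ]; omega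
      have hlen : (roundStep b l₁).length = 2^n := by
        rw [roundStep_length, h, pow_succ]; omega
      rw [Function.iterate_succ_apply, Function.iterate_succ_apply,
        Function.iterate_succ_apply, roundStep_append b l₁ l₂ he,
        iter_append b n _ _ hlen]

theorem knock_append (n : ℕ) (b : ℕ → ℕ → Bool) (π₁ π₂ : List ℕ)
    (h₁ : π₁.length = 2^n) (h₂ : π₂.length = 2^n) :
    knockWinner (n+1) b (π₁ ++ π₂)
      = if b (knockWinner n b π₁) (knockWinner n b π₂) then knockWinner n b π₁
        else knockWinner n b π₂ := by
  rw [knockWinner, Function.iterate_succ_apply', iter_append b n π₁ π₂ h₁,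
    iter_singleton b n π₁ h₁, iter_singleton b n π₂ h₂]
  rfl

theorem knock_congr (n : ℕ) (b b' : ℕ → ℕ → Bool) (π : List ℕ)
    (h : ∀ a ∈ π, ∀ c ∈ π, b a c = b' a c) :
    knockWinner n b π = knockWinner n b' π := by
  rw [knockWinner, knockWinner, iter_congr b b' n π h]

theorem knock_map (n : ℕ) (b b' : ℕ → ℕ → Bool) (f : ℕ → ℕ) (π : List ℕ)
    (hπ : π.length = 2^n)
    (h : ∀ a ∈ π, ∀ c ∈ π, b' (f a) (f c) = b a c) :
    knockWinner n b' (π.map f) = f (knockWinner n b π) := by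
  rw [knockWinner, iter_map b b' f n π h, iter_singleton b n π hπ]
  rfl

theorem knock_mem (n : ℕ) (b : ℕ → ℕ → Bool) (π : List ℕ) (hπ : π.length = 2^n) :
    knockWinner n b π ∈ π := by
  apply iter_subset b n π
  rw [iter_singleton b n π hπ]
  simp

/-- The main induction: every element of `[2^(m+3)]` is a possible winner of `η_m`. -/
theorem main_ind : ∀ m : ℕ, ∀ k ∈ List.range' 1 (2^(m+3)),
    ∃ π : List ℕ, π.Perm (List.range' 1 (2^(m+3))) ∧ knockWinner (m+3) (eta m) π = k := by
  intro m
  induction m with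
  | zero =>
    intro k hk
    obtain ⟨hk1, hk2⟩ : 1 ≤ k ∧ k < 9 := by simpa using List.mem_range'_1.1 hk
    interval_cases k
    · exact ⟨[1,2,3,4,5,6,7,8], by decide, by decide⟩
    · exact ⟨[1,3,4,5,2,6,7,8], by decide, by decide⟩
    · exact ⟨[1,2,4,5,3,8,6,7], by decide, by decide⟩
    · exact ⟨[1,2,3,6,4,8,5,7], by decide, by decide⟩
    · exact ⟨[1,3,4,6,2,5,7,8], by decide, by decide⟩
    · exact ⟨[1,2,3,4,5,8,6,7], by decide, by decide⟩
    · exact ⟨[1,2,3,6,4,5,7,8], by decide, by decide⟩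
    · exact ⟨[1,3,2,8,4,6,5,7], by decide, by decide⟩
  | succ m ih =>
    intro k hk
    simp only [show m+1+3 = m+4 from rfl] at hk ⊢
    set K := 2^(m+3) with hK
    have hKpos : 8 ≤ K := by
      have : 2^3 ≤ 2^(m+3) := Nat.pow_le_pow_right (by norm_num) (by omega)
      simpa using this
    have hk' : 1 ≤ k ∧ k < 1 + 2^(m+4) := List.mem_range'_1.1 hk
    have h2K : 2^(m+4) = K + K := by rw [hK, pow_succ]; omega
    have hsplit : List.range' 1 K ++ List.range' (K+1) K = List.range' 1 (2^(m+4)) := by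
      have h := List.range'_append (s := 1) (m := K) (n := K) (step := 1)
      rw [one_mul, Nat.add_comm 1 K] at h
      rw [h2K, h]
    -- the upper-half shift
    have hmapr : (List.range' 1 K).map (fun x => K + x) = List.range' (K+1) K :=
      List.map_add_range' (a := K) 1 K 1
    -- eta agreement lemmas
    have hlow : ∀ a, a ≤ K → ∀ c, c ≤ K → eta (m+1) a c = eta m a c := by
      intro a ha c hc
      show (if a ≤ 2^(m+3) ∧ c ≤ 2^(m+3) then eta m a c else _) = eta m a c
      rw [if_pos ⟨ha, hc⟩]
    have hhigh : ∀ a, 1 ≤ a → ∀ c, 1 ≤ c → eta (m+1) (K+a) (K+c) = eta m a c := by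
      intro a ha c hc
      show (if K+a ≤ 2^(m+3) ∧ K+c ≤ 2^(m+3) then _
        else if 2^(m+3) < K+a ∧ 2^(m+3) < K+c then eta m (K+a-2^(m+3)) (K+c-2^(m+3))
        else _) = eta m a c
      rw [if_neg (by omega), if_pos ⟨by omega, by omega⟩]
      congr 1 <;> omega
    have hcross : ∀ a, 1 ≤ a → a ≤ K → ∀ c, K < c →
        eta (m+1) a c = decide ((a + c) % 2 = 0) := by
      intro a ha haK c hc
      show (if a ≤ 2^(m+3) ∧ c ≤ 2^(m+3) then _
        else if 2^(m+3) < a ∧ 2^(m+3) < c then _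
        else if a ≤ 2^(m+3) then decide ((a+c) % 2 = 0) else _) = _
      rw [if_neg (by omega), if_neg (by omega), if_pos (by omega)]
    by_cases hcase : k ≤ K
    · -- k in the lower half
      obtain ⟨π₁, hperm, hwin⟩ := ih k (List.mem_range'_1.2 ⟨hk'.1, by omega⟩)
      have hlen : π₁.length = 2^(m+3) := by
        rw [hperm.length_eq, List.length_range']
      have hmem : ∀ a ∈ π₁, 1 ≤ a ∧ a ≤ K := by
        intro a ha
        have := List.mem_range'_1.1 (hperm.mem_iff.1 ha)
        omega
      refine ⟨π₁ ++ π₁.map (fun x => K + x), ?_, ?_⟩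
      · refine (hperm.append (hperm.map _)).trans ?_
        rw [hmapr, hsplit]
      · have hw₁ : knockWinner (m+3) (eta (m+1)) π₁ = k := by
          rw [knock_congr (m+3) (eta (m+1)) (eta m) π₁
            (fun a ha c hc => hlow a (hmem a ha).2 c (hmem c hc).2)]
          exact hwin
        have hw₂ : knockWinner (m+3) (eta (m+1)) (π₁.map (fun x => K + x)) = K + k := by
          rw [knock_map (m+3) (eta m) (eta (m+1)) _ π₁ hlen
            (fun a ha c hc => hhigh a (hmem a ha).1 c (hmem c hc).1), hwin]
        rw [show m+4 = (m+3)+1 from rfl,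
          knock_append (m+3) (eta (m+1)) _ _ hlen (by simpa using hlen), hw₁, hw₂]
        rw [hcross k hk'.1 hcase (K+k) (by omega)]
        have : (k + (K + k)) % 2 = 0 := by
          have : (k + (K + k)) = 2*k + 2^(m+3) := by omega
          rw [this, pow_succ]; omega
        simp [this]
    · -- k in the upper half
      have hk2 : k - K ∈ List.range' 1 (2^(m+3)) :=
        List.mem_range'_1.2 ⟨by omega, by omega⟩
      obtain ⟨π₁, hperm, hwin⟩ := ih (k - K) hk2
      set l : ℕ := if (k - K) % 2 = 0 then 1 else 2 with hl
      have hlmem : l ∈ List.range' 1 (2^(m+3)) := by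
        apply List.mem_range'_1.2
        constructor
        · rw [hl]; split <;> omega
        · rw [hl]; split <;> omega
      obtain ⟨π₀, hperm₀, hwin₀⟩ := ih l hlmem
      have hlen : π₁.length = 2^(m+3) := by rw [hperm.length_eq, List.length_range']
      have hlen₀ : π₀.length = 2^(m+3) := by rw [hperm₀.length_eq, List.length_range']
      have hmem : ∀ a ∈ π₁, 1 ≤ a ∧ a ≤ K := by
        intro a ha
        have := List.mem_range'_1.1 (hperm.mem_iff.1 ha)
        omega
      have hmem₀ : ∀ a ∈ π₀, 1 ≤ a ∧ a ≤ K := by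
        intro a ha
        have := List.mem_range'_1.1 (hperm₀.mem_iff.1 ha)
        omega
      refine ⟨π₀ ++ π₁.map (fun x => K + x), ?_, ?_⟩
      · refine (hperm₀.append (hperm.map _)).trans ?_
        rw [hmapr, hsplit]
      · have hw₁ : knockWinner (m+3) (eta (m+1)) π₀ = l := by
          rw [knock_congr (m+3) (eta (m+1)) (eta m) π₀
            (fun a ha c hc => hlow a (hmem₀ a ha).2 c (hmem₀ c hc).2)]
          exact hwin₀
        have hw₂ : knockWinner (m+3) (eta (m+1)) (π₁.map (fun x => K + x)) = K + (k-K) := by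
          rw [knock_map (m+3) (eta m) (eta (m+1)) _ π₁ hlen
            (fun a ha c hc => hhigh a (hmem a ha).1 c (hmem c hc).1), hwin]
        have hKk : K + (k - K) = k := by omega
        rw [hKk] at hw₂
        rw [show m+4 = (m+3)+1 from rfl,
          knock_append (m+3) (eta (m+1)) _ _ hlen₀ (by simpa using hlen), hw₁, hw₂]
        have hlK : l ≤ K := by rw [hl]; split <;> omega
        have hl1 : 1 ≤ l := by rw [hl]; split <;> omega
        rw [hcross l hl1 hlK k (by omega)]
        have : (l + k) % 2 ≠ 0 := by
          have hKe : K % 2 = 0 := by rw [hK, pow_succ]; omega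
          have : k % 2 = (k - K) % 2 := by omega
          rw [hl]
          rcases Nat.even_or_odd (k - K) with he | ho
          · have := Nat.even_iff.1 he; simp [this]; omega
          · have := Nat.odd_iff.1 ho; simp [this]; omega
        simp [this]

/-- Theorem 1(2): for every `n ≥ 3`, the tournament `η_{n-3}` on `{1,…,2^n}` admits
every candidate as a possible knockout winner: `w_n(η_{n-3}, Π(n)) = [2^n]`. -/
theorem stmt2 (n : ℕ) (hn : 3 ≤ n) :
    {w : ℕ | ∃ π : List ℕ, π.Perm (List.range' 1 (2^n)) ∧ knockWinner n (eta (n-3)) π = w}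
      = {k : ℕ | k ∈ List.range' 1 (2^n)} := by
  obtain ⟨m, rfl⟩ : ∃ m, n = m + 3 := ⟨n - 3, by omega⟩
  ext w
  simp only [Set.mem_setOf_eq, Nat.add_sub_cancel]
  constructor
  · rintro ⟨π, hperm, rfl⟩
    have hlen : π.length = 2^(m+3) := by rw [hperm.length_eq, List.length_range']
    exact hperm.mem_iff.1 (knock_mem (m+3) (eta m) π hlen)
  · intro hw
    exact main_ind m w hw
end

section
/- Let c ≥ 2 be an integer and let G^(1), …, G^(c) be finite oriented graphs on pairwise disjoint vertex sets V^(1), …, V^(c), and let G be the oriented graph on the disjoint union of the V^(ℓ) whose arrow set is the disjoint union of the arrow sets (in particular G has no arrows between vertices of different V^(ℓ)). Suppose for each ℓ ∈ [c] there is a voting profile R^(ℓ) on V^(ℓ) with exactly 2r rows (the same even number for all ℓ) that generates G^(ℓ). Then there exists a voting profile R on the union vertex set, with exactly 2r rows, that generates G. -/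
/-- `R` is a voting profile on the finite candidate set `V` that generates the oriented
graph with arrow relation `E`: every row of `R` is a permutation (linear order) of `V`
and, for distinct `i, j ∈ V`, there is an arrow from `i` to `j` iff strictly more rows
of `R` rank `i` before `j` than rank `j` before `i`. -/
def GeneratesOn {α : Type*} [DecidableEq α] (R : List (List α)) (V : Finset α)
    (E : α → α → Prop) : Prop :=
  (∀ ρ ∈ R, ρ.Nodup ∧ ρ.toFinset = V) ∧
  ∀ i ∈ V, ∀ j ∈ V, i ≠ j →
    (E i j ↔ (R.filter fun ρ => decide (ρ.idxOf j < ρ.idxOf i)).length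
      < (R.filter fun ρ => decide (ρ.idxOf i < ρ.idxOf j)).length)

private lemma map_getD_range {β : Type*} (L : List β) (d : β) :
    (List.range L.length).map (fun k => L.getD k d) = L := by
  apply List.ext_getElem
  · simp
  · intro n h1 h2
    simp [List.getD_eq_getElem?_getD, List.getElem?_eq_getElem h2]

private lemma countP_range_getD {β : Type*} (L : List β) (d : β) (q : β → Bool) :
    (List.range L.length).countP (fun k => q (L.getD k d)) = L.countP q := by
  conv_rhs => rw [← map_getD_range L d, List.countP_map]
  rfl

private lemma indexOf_flatten {α β : Type*} [DecidableEq α] (f : β → List α)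
    (B1 B2 : List β) (l : β) (i : α) (hi : i ∈ f l) (hB1 : ∀ b ∈ B1, i ∉ f b) :
    (((B1 ++ l :: B2).map f).flatten).idxOf i
      = ((B1.map f).flatten).length + (f l).idxOf i := by
  have hnot : i ∉ (B1.map f).flatten := by
    simp only [List.mem_flatten, List.mem_map, not_exists]
    rintro t ⟨⟨b, hb, rfl⟩, hit⟩
    exact hB1 b hb hit
  rw [List.map_append, List.flatten_append, List.idxOf_append_of_notMem hnot,
    List.map_cons, List.flatten_cons, List.idxOf_append_of_mem hi]

private lemma indexOf_flatten_lt {α β : Type*} [DecidableEq α] (f : β → List α)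
    (B1 B2 : List β) (l l' : β) (i j : α) (hi : i ∈ f l) (hj : j ∈ f l')
    (hl' : l' ∈ B2) (hB1 : ∀ b ∈ B1, i ∉ f b)
    (hjB1 : ∀ b ∈ B1, j ∉ f b) (hjl : j ∉ f l) :
    (((B1 ++ l :: B2).map f).flatten).idxOf i
      < (((B1 ++ l :: B2).map f).flatten).idxOf j := by
  rw [indexOf_flatten f B1 B2 l i hi hB1]
  have hL : (((B1 ++ l :: B2).map f).flatten)
      = ((B1.map f).flatten ++ f l) ++ ((B2.map f).flatten) := by
    simp [List.map_append]
  have hjnot : j ∉ (B1.map f).flatten ++ f l := by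
    simp only [List.mem_append, List.mem_flatten, List.mem_map, not_or, not_exists]
    exact ⟨by rintro t ⟨⟨b, hb, rfl⟩, hjt⟩; exact hjB1 b hb hjt, hjl⟩
  rw [hL, List.idxOf_append_of_notMem hjnot]
  have h1 : (f l).idxOf i < (f l).length := List.idxOf_lt_length_iff.2 hi
  have h2 : ((B1.map f).flatten ++ f l).length
      = ((B1.map f).flatten).length + (f l).length := List.length_append
  omega

private lemma mem_order {β : Type*} [DecidableEq β] {B : List β} {l l' : β}
    (hl : l ∈ B) (hl' : l' ∈ B) (hne : l ≠ l') :
    (∃ B1 B2, B = B1 ++ l :: B2 ∧ l' ∈ B2) ∨ (∃ B1 B2, B = B1 ++ l' :: B2 ∧ l ∈ B2) := by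
  induction B with
  | nil => cases hl
  | cons a t ih =>
    by_cases hal : a = l
    · subst hal
      have hl't : l' ∈ t := by
        rcases List.mem_cons.1 hl' with h | h
        · exact absurd h.symm hne
        · exact h
      exact Or.inl ⟨[], t, rfl, hl't⟩
    · by_cases hal' : a = l'
      · subst hal'
        have hlt : l ∈ t := (List.mem_cons.1 hl).resolve_left (fun h => hal h.symm)
        exact Or.inr ⟨[], t, rfl, hlt⟩
      · have hlt : l ∈ t := (List.mem_cons.1 hl).resolve_left (fun h => hal h.symm)
        have hl't : l' ∈ t := (List.mem_cons.1 hl').resolve_left (fun h => hal' h.symm)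
        rcases ih hlt hl't with ⟨B1, B2, hB, h⟩ | ⟨B1, B2, hB, h⟩
        · exact Or.inl ⟨a :: B1, B2, by rw [hB]; rfl, h⟩
        · exact Or.inr ⟨a :: B1, B2, by rw [hB]; rfl, h⟩

private lemma countP_range_two_mul (r : ℕ) (p : ℕ → Bool)
    (h1 : ∀ k < r, p k = true) (h2 : ∀ k, r ≤ k → k < 2 * r → p k = false) :
    (List.range (2 * r)).countP p = r := by
  rw [two_mul, List.range_add, List.countP_append, List.countP_map]
  have e1 : (List.range r).countP p = r := by
    rw [List.countP_eq_length.2 (fun a ha => h1 a (List.mem_range.1 ha)), List.length_range]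
  have e2 : (List.range r).countP (p ∘ (r + ·)) = 0 := by
    rw [List.countP_eq_zero]
    intro a ha
    have := List.mem_range.1 ha
    simp [Function.comp, h2 (r + a) (Nat.le_add_right r a) (by omega)]
  omega

private lemma countP_range_two_mul' (r : ℕ) (p : ℕ → Bool)
    (h1 : ∀ k < r, p k = false) (h2 : ∀ k, r ≤ k → k < 2 * r → p k = true) :
    (List.range (2 * r)).countP p = r := by
  rw [two_mul, List.range_add, List.countP_append, List.countP_map]
  have e1 : (List.range r).countP p = 0 := by
    rw [List.countP_eq_zero]
    intro a ha
    simp [h1 a (List.mem_range.1 ha)]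
  have e2 : (List.range r).countP (p ∘ (r + ·)) = r := by
    rw [List.countP_eq_length.2 (fun a ha => ?_), List.length_range]
    have := List.mem_range.1 ha
    exact h2 (r + a) (Nat.le_add_right r a) (by omega)
  omega

/-- Lemma 2: if the oriented graphs `G⁽¹⁾,…,G⁽ᶜ⁾` (`c ≥ 2`) live on pairwise disjoint
vertex sets and each `G⁽ˡ⁾` is generated by a voting profile `R⁽ˡ⁾` with the same even
number `2r` of rows, then the disjoint-union graph (with no arrows between different
pieces) is generated by a voting profile with `2r` rows on the union of the vertex sets. -/
theorem stmt4 {α : Type*} [DecidableEq α] (c r : ℕ) (hc : 2 ≤ c) (hr : 0 < r)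
    (V : Fin c → Finset α)
    (hdisj : ∀ l l' : Fin c, l ≠ l' → Disjoint (V l) (V l'))
    (E : Fin c → α → α → Prop)
    (hE : ∀ l i j, E l i j → i ∈ V l ∧ j ∈ V l)
    (R : Fin c → List (List α))
    (hlen : ∀ l, (R l).length = 2 * r)
    (hgen : ∀ l, GeneratesOn (R l) (V l) (E l)) :
    ∃ S : List (List α), S.length = 2 * r ∧
      GeneratesOn S (Finset.univ.biUnion V) (fun i j => ∃ l, E l i j) := by
  classical
  set B : ℕ → List (Fin c) := fun k =>
    if k < r then List.finRange c else (List.finRange c).reverse with hBdef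
  set f : ℕ → Fin c → List α := fun k l => (R l).getD k [] with hfdef
  set row : ℕ → List α := fun k => ((B k).map (f k)).flatten with hrowdef
  -- basic facts
  have hBmem : ∀ k l, l ∈ B k := by
    intro k l
    simp only [hBdef]
    split <;> simp [List.mem_finRange]
  have hBnd : ∀ k, (B k).Nodup := by
    intro k
    simp only [hBdef]
    split
    · exact List.nodup_finRange c
    · exact List.nodup_reverse.2 (List.nodup_finRange c)
  have hfm : ∀ k, k < 2 * r → ∀ l, f k l ∈ R l := by
    intro k hk l
    have hk' : k < (R l).length := by rw [hlen l]; exact hk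
    simp only [hfdef]
    rw [List.getD_eq_getElem?_getD, List.getElem?_eq_getElem hk']
    exact List.getElem_mem hk'
  have hf : ∀ k, k < 2 * r → ∀ l, (f k l).Nodup ∧ (f k l).toFinset = V l := by
    intro k hk l
    exact (hgen l).1 _ (hfm k hk l)
  have huniq : ∀ (x : α) (l l' : Fin c), x ∈ V l → x ∈ V l' → l = l' := by
    intro x l l' h h'
    by_contra hne
    exact Finset.disjoint_left.1 (hdisj l l' hne) h h'
  have hxf : ∀ k, k < 2 * r → ∀ (x : α) (lx b : Fin c), x ∈ V lx → b ≠ lx →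
      x ∉ f k b := by
    intro k hk x lx b hx hb hmem
    have : x ∈ V b := by rw [← (hf k hk b).2]; exact List.mem_toFinset.2 hmem
    exact hb (huniq x b lx this hx)
  have hmemf : ∀ k, k < 2 * r → ∀ (x : α) (lx : Fin c), x ∈ V lx → x ∈ f k lx := by
    intro k hk x lx hx
    exact List.mem_toFinset.1 (by rw [(hf k hk lx).2]; exact hx)
  refine ⟨(List.range (2 * r)).map row, by simp, ?_, ?_⟩
  · -- each row is a permutation of the union
    intro ρ hρ
    obtain ⟨k, hk, rfl⟩ := List.mem_map.1 hρ
    have hk : k < 2 * r := List.mem_range.1 hk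
    constructor
    · rw [hrowdef]
      rw [List.nodup_flatten]
      constructor
      · rintro t ht
        obtain ⟨l, _, rfl⟩ := List.mem_map.1 ht
        exact (hf k hk l).1
      · rw [List.pairwise_map]
        refine (hBnd k).imp ?_
        intro a b hab x hxa hxb
        have ha : x ∈ V a := by rw [← (hf k hk a).2]; exact List.mem_toFinset.2 hxa
        have hb : x ∈ V b := by rw [← (hf k hk b).2]; exact List.mem_toFinset.2 hxb
        exact hab (huniq x a b ha hb)
    · ext a
      simp only [List.mem_toFinset, hrowdef, List.mem_flatten, List.mem_map,
        Finset.mem_biUnion, Finset.mem_univ, true_and]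
      constructor
      · rintro ⟨t, ⟨l, _, rfl⟩, hat⟩
        exact ⟨l, by rw [← (hf k hk l).2]; exact List.mem_toFinset.2 hat⟩
      · rintro ⟨l, hal⟩
        exact ⟨f k l, ⟨l, hBmem k l, rfl⟩, hmemf k hk a l hal⟩
  · -- the arrow condition
    intro i hi j hj hij
    obtain ⟨li, _, hili⟩ := Finset.mem_biUnion.1 hi
    obtain ⟨lj, _, hjlj⟩ := Finset.mem_biUnion.1 hj
    have hfilter : ∀ (x y : α),
        (((List.range (2 * r)).map row).filter
          (fun ρ => decide (ρ.idxOf x < ρ.idxOf y))).length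
        = (List.range (2 * r)).countP
            (fun k => decide ((row k).idxOf x < (row k).idxOf y)) := by
      intro x y
      rw [← List.countP_eq_length_filter, List.countP_map]
      rfl
    by_cases hll : li = lj
    · -- same block
      subst hll
      -- per-row equivalence
      have hrowiff : ∀ (x y : α), x ∈ V li → y ∈ V li → ∀ k, k < 2 * r →
          ((row k).idxOf x < (row k).idxOf y ↔
            (f k li).idxOf x < (f k li).idxOf y) := by
        intro x y hx hy k hk
        obtain ⟨B1, B2, hB⟩ := List.append_of_mem (hBmem k li)
        have hnd : (B1 ++ li :: B2).Nodup := hB ▸ hBnd k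
        have hliB1 : li ∉ B1 := fun h =>
          (List.disjoint_of_nodup_append hnd) h (List.mem_cons_self (a := li) (l := B2))
        have hnx : ∀ b ∈ B1, x ∉ f k b := fun b hb =>
          hxf k hk x li b hx (fun h => hliB1 (h ▸ hb))
        have hny : ∀ b ∈ B1, y ∉ f k b := fun b hb =>
          hxf k hk y li b hy (fun h => hliB1 (h ▸ hb))
        rw [hrowdef]
        simp only [hB]
        rw [indexOf_flatten (f k) B1 B2 li x (hmemf k hk x li hx) hnx,
          indexOf_flatten (f k) B1 B2 li y (hmemf k hk y li hy) hny]
        omega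
      have hcount : ∀ (x y : α), x ∈ V li → y ∈ V li →
          (((List.range (2 * r)).map row).filter
            (fun ρ => decide (ρ.idxOf x < ρ.idxOf y))).length
          = ((R li).filter (fun ρ => decide (ρ.idxOf x < ρ.idxOf y))).length := by
        intro x y hx hy
        rw [hfilter x y, ← List.countP_eq_length_filter]
        have : (List.range (2 * r)).countP
            (fun k => decide ((row k).idxOf x < (row k).idxOf y))
            = (List.range (2 * r)).countP
              (fun k => decide (((R li).getD k []).idxOf x
                < ((R li).getD k []).idxOf y)) := by
          apply List.countP_congr
          intro k hk
          have hk := List.mem_range.1 hk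
          simp only [decide_eq_true_eq]
          exact hrowiff x y hx hy k hk
        rw [this, ← countP_range_getD (R li) []
          (fun ρ => decide (List.idxOf x ρ < List.idxOf y ρ)), hlen li]
      have hEiff : (∃ l, E l i j) ↔ E li i j := by
        constructor
        · rintro ⟨l'', h⟩
          have h1 := (hE l'' i j h).1
          have : l'' = li := huniq i l'' li h1 hili
          exact this ▸ h
        · exact fun h => ⟨li, h⟩
      rw [hcount i j hili hjlj, hcount j i hjlj hili]
      exact hEiff.trans ((hgen li).2 i hili j hjlj hij)
    · -- different blocks
      have hnE : ¬ ∃ l, E l i j := by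
        rintro ⟨l'', h⟩
        have h1 := (hE l'' i j h).1
        have h2 := (hE l'' i j h).2
        exact hll ((huniq i l'' li h1 hili).symm.trans (huniq j l'' lj h2 hjlj))
      -- key: per-row order for cross pairs
      have key : ∀ (x y : α) (lx ly : Fin c) (B1 B2 : List (Fin c)),
          x ∈ V lx → y ∈ V ly → lx ≠ ly →
          List.finRange c = B1 ++ lx :: B2 → ly ∈ B2 →
          ∀ k, k < 2 * r →
            ((row k).idxOf x < (row k).idxOf y ↔ k < r) := by
        intro x y lx ly B1 B2 hx hy hxy hB hly k hk
        have hltval : ∀ (C1 C2 : List (Fin c)), B k = C1 ++ lx :: C2 → ly ∈ C2 →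
            (row k).idxOf x < (row k).idxOf y := by
          intro C1 C2 hC hlyC
          have hnd : (C1 ++ lx :: C2).Nodup := hC ▸ hBnd k
          have hdC := List.disjoint_of_nodup_append hnd
          have hlxC1 : lx ∉ C1 := fun h => hdC h (List.mem_cons_self (a := lx) (l := C2))
          have hlyC1 : ly ∉ C1 := fun h => hdC h (List.mem_cons.2 (Or.inr hlyC))
          have hnx : ∀ b ∈ C1, x ∉ f k b := fun b hb =>
            hxf k hk x lx b hx (fun h => hlxC1 (h ▸ hb))
          have hny : ∀ b ∈ C1, y ∉ f k b := fun b hb =>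
            hxf k hk y ly b hy (fun h => hlyC1 (h ▸ hb))
          have hylx : y ∉ f k lx := hxf k hk y ly lx hy hxy
          rw [hrowdef]
          simp only [hC]
          exact indexOf_flatten_lt (f k) C1 C2 lx ly x y (hmemf k hk x lx hx)
            (hmemf k hk y ly hy) hlyC hnx hny hylx
        have hgtval : ∀ (C1 C2 : List (Fin c)), B k = C1 ++ ly :: C2 → lx ∈ C2 →
            (row k).idxOf y < (row k).idxOf x := by
          intro C1 C2 hC hlxC
          have hnd : (C1 ++ ly :: C2).Nodup := hC ▸ hBnd k
          have hdC := List.disjoint_of_nodup_append hnd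
          have hlyC1 : ly ∉ C1 := fun h => hdC h (List.mem_cons_self (a := ly) (l := C2))
          have hlxC1 : lx ∉ C1 := fun h => hdC h (List.mem_cons.2 (Or.inr hlxC))
          have hny : ∀ b ∈ C1, y ∉ f k b := fun b hb =>
            hxf k hk y ly b hy (fun h => hlyC1 (h ▸ hb))
          have hnx : ∀ b ∈ C1, x ∉ f k b := fun b hb =>
            hxf k hk x lx b hx (fun h => hlxC1 (h ▸ hb))
          have hxly : x ∉ f k ly := hxf k hk x lx ly hx (Ne.symm hxy)
          rw [hrowdef]
          simp only [hC]
          exact indexOf_flatten_lt (f k) C1 C2 ly lx y x (hmemf k hk y ly hy)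
            (hmemf k hk x lx hx) hlxC hny hnx hxly
        by_cases hkr : k < r
        · have hBk : B k = B1 ++ lx :: B2 := by
            simp only [hBdef]; rw [if_pos hkr]; exact hB
          simp only [hkr, iff_true]
          exact hltval B1 B2 hBk hly
        · -- descending rows: y comes before x
          obtain ⟨C, D, hCD⟩ := List.append_of_mem (List.mem_reverse.2 hly :
            ly ∈ B2.reverse)
          have hBk : B k = (C ++ ly :: (D ++ lx :: B1.reverse)) := by
            simp only [hBdef]; rw [if_neg hkr, hB]
            rw [List.reverse_append, List.reverse_cons, hCD]
            simp
          simp only [hkr, iff_false, not_lt]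
          exact le_of_lt (hgtval C (D ++ lx :: B1.reverse) hBk
            (List.mem_append.2 (Or.inr (List.mem_cons_self (a := lx) (l := B1.reverse)))))
      -- relative index is never equal for distinct candidates in a row
      have htri : ∀ k, k < 2 * r → (row k).idxOf i ≠ (row k).idxOf j := by
        intro k hk
        have hmemi : i ∈ row k := by
          rw [hrowdef]
          exact List.mem_flatten.2 ⟨f k li, List.mem_map.2 ⟨li, hBmem k li, rfl⟩,
            hmemf k hk i li hili⟩
        have hmemj : j ∈ row k := by
          rw [hrowdef]
          exact List.mem_flatten.2 ⟨f k lj, List.mem_map.2 ⟨lj, hBmem k lj, rfl⟩,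
            hmemf k hk j lj hjlj⟩
        exact fun h => hij ((List.idxOf_inj hmemi).1 h)
      -- both counts equal r
      have hcounts : ∀ (x y : α), (∀ k, k < 2 * r →
            ((row k).idxOf x < (row k).idxOf y ↔ k < r)) →
          (∀ k, k < 2 * r → (row k).idxOf x ≠ (row k).idxOf y) →
          (List.range (2 * r)).countP
            (fun k => decide ((row k).idxOf x < (row k).idxOf y)) = r ∧
          (List.range (2 * r)).countP
            (fun k => decide ((row k).idxOf y < (row k).idxOf x)) = r := by
        intro x y hk hne
        constructor
        · apply countP_range_two_mul
          · intro k hkr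
            exact decide_eq_true ((hk k (by omega)).2 hkr)
          · intro k hk1 hk2
            exact decide_eq_false (fun h => absurd ((hk k hk2).1 h) (by omega))
        · apply countP_range_two_mul'
          · intro k hkr
            have := (hk k (by omega)).2 hkr
            exact decide_eq_false (by omega)
          · intro k hk1 hk2
            have h1 : ¬ (row k).idxOf x < (row k).idxOf y :=
              fun h => absurd ((hk k hk2).1 h) (by omega)
            have h2 := hne k hk2
            exact decide_eq_true (by omega)
      have hne' : (∃ B1 B2, List.finRange c = B1 ++ li :: B2 ∧ lj ∈ B2) ∨
          (∃ B1 B2, List.finRange c = B1 ++ lj :: B2 ∧ li ∈ B2) :=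
        mem_order (List.mem_finRange li) (List.mem_finRange lj) hll
      have hbothr : (List.range (2 * r)).countP
            (fun k => decide ((row k).idxOf i < (row k).idxOf j)) = r ∧
          (List.range (2 * r)).countP
            (fun k => decide ((row k).idxOf j < (row k).idxOf i)) = r := by
        rcases hne' with ⟨B1, B2, hB, hlj⟩ | ⟨B1, B2, hB, hli2⟩
        · exact hcounts i j (key i j li lj B1 B2 hili hjlj hll hB hlj) htri
        · have := hcounts j i (key j i lj li B1 B2 hjlj hili (Ne.symm hll) hB hli2)
            (fun k hk => (htri k hk).symm)
          exact ⟨this.2, this.1⟩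
      refine iff_of_false hnE ?_
      rw [hfilter i j, hfilter j i, hbothr.1, hbothr.2]
      omega
end

section
/- For every n ∈ ℕ₀, the recursively constructed voting profile R_n on [2^{n+3}] has exactly 4n+10 rows and generates the tournament η_n; moreover the voting profile R̃_n obtained from R_n by deleting its last row (so with 4n+9 rows) also generates η_n. -/
/-- Number of rows (preference lists) of the voting profile `R` ranking `i` before `j`. -/
def prefCount (R : List (List ℕ)) (i j : ℕ) : ℕ :=
  (R.filter fun ρ => decide (ρ.idxOf i < ρ.idxOf j)).length

/-- `R` is a voting profile on the candidate set `{1,…,m}` generating the tournament `η`: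
every row is a permutation of `{1,…,m}` and, for distinct candidates `i,j`, `i ▷ j`
holds iff strictly more rows rank `i` before `j` than rank `j` before `i`. -/
def Generates (R : List (List ℕ)) (m : ℕ) (η : ℕ → ℕ → Bool) : Prop :=
  (∀ ρ ∈ R, ρ.Perm (List.range' 1 m)) ∧
  ∀ i ∈ List.range' 1 m, ∀ j ∈ List.range' 1 m, i ≠ j →
    (η i j = true ↔ prefCount R j i < prefCount R i j)

/-- Stearns' ten-row voting profile `R₀` on `{1,…,8}`. -/
def R0 : List (List ℕ) :=
  [[8,1,5,2,3,4,6,7],[2,7,6,4,1,3,5,8],[2,7,3,6,4,5,8,1],[4,1,3,8,5,6,7,2],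
   [3,5,2,6,7,1,4,8],[6,8,4,1,5,7,2,3],[6,7,3,4,8,1,2,5],[8,5,2,7,1,4,3,6],
   [7,8,5,6,3,4,1,2],[1,2,3,4,5,6,7,8]]

/-- The increasing list of the odd elements of `{1,…,2^(n+2)}`. -/
def Aodd (n : ℕ) : List ℕ := (List.range (2^(n+1))).map fun t => 2*t+1

/-- The increasing list of the even elements of `{1,…,2^(n+2)}`. -/
def Aeven (n : ℕ) : List ℕ := (List.range (2^(n+1))).map fun t => 2*t+2

/-- The increasing list of the odd elements of `{2^(n+2)+1,…,2^(n+3)}`. -/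
def Bodd (n : ℕ) : List ℕ := (Aodd n).map (· + 2^(n+2))

/-- The increasing list of the even elements of `{2^(n+2)+1,…,2^(n+3)}`. -/
def Beven (n : ℕ) : List ℕ := (Aeven n).map (· + 2^(n+2))

/-- The preference list `v₁ = (A₁, B₁, A₂, B₂)` on `{1,…,2^(n+3)}`. -/
def v1 (n : ℕ) : List ℕ := Aodd n ++ Bodd n ++ Aeven n ++ Beven n

/-- The preference list `v₂ = (Ā₂, B̄₂, Ā₁, B̄₁)` on `{1,…,2^(n+3)}`. -/
def v2 (n : ℕ) : List ℕ :=
  (Aeven n).reverse ++ (Beven n).reverse ++ (Aodd n).reverse ++ (Bodd n).reverse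

/-- The preference list `v₃ = (B₁, A₂, B₂, A₁)` on `{1,…,2^(n+3)}`. -/
def v3 (n : ℕ) : List ℕ := Bodd n ++ Aeven n ++ Beven n ++ Aodd n

/-- The preference list `v₄ = (B̄₂, Ā₁, B̄₁, Ā₂)` on `{1,…,2^(n+3)}`. -/
def v4 (n : ℕ) : List ℕ :=
  (Beven n).reverse ++ (Aodd n).reverse ++ (Bodd n).reverse ++ (Aeven n).reverse

/-- `bowtie P Q`: the voting profile whose `s`-th row (1-based) is the concatenation
`P_s ++ Q_s` when `s` is odd and `Q_s ++ P_s` when `s` is even. -/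
def bowtie (P Q : List (List ℕ)) : List (List ℕ) :=
  ((P.zip Q).zipIdx.map Prod.swap).map fun p => if p.1 % 2 = 0 then p.2.1 ++ p.2.2 else p.2.2 ++ p.2.1

/-- The recursively constructed voting profile `R_n` on `{1,…,2^(n+3)}`:
`R_n = (v₁, v₂, v₃, v₄, R_{n-1} ⋈ (R_{n-1} + 2^(n+2)·𝟙))_V`. -/
def Rprofile : ℕ → List (List ℕ)
  | 0 => R0
  | n+1 =>
    v1 (n+1) :: v2 (n+1) :: v3 (n+1) :: v4 (n+1) ::
      bowtie (Rprofile n) ((Rprofile n).map fun ρ => ρ.map (· + 2^(n+3)))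



def List.enum {α : Type} (l : List α) : List (ℕ × α) := l.zipIdx.map Prod.swap

theorem List.enum_map {α β : Type} (l : List α) (f : α → β) :
    (l.map f).enum = l.enum.map (Prod.map id f) := by
  simp [List.enum, List.zipIdx_map, List.map_map]

theorem List.enum_map_snd {α : Type} (l : List α) : l.enum.map Prod.snd = l := by
  simp only [List.enum, List.map_map]
  exact List.zipIdx_map_fst 0 l

theorem List.enum_map_fst {α : Type} (l : List α) :
    l.enum.map Prod.fst = List.range l.length := by
  simp only [List.enum, List.map_map]
  rw [List.range_eq_range']
  exact List.zipIdx_map_snd 0 l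

section Aux
open List

lemma prefCount_nil (i j : ℕ) : prefCount [] i j = 0 := rfl

lemma prefCount_cons (ρ : List ℕ) (R : List (List ℕ)) (i j : ℕ) :
    prefCount (ρ :: R) i j =
      (if ρ.idxOf i < ρ.idxOf j then 1 else 0) + prefCount R i j := by
  simp only [prefCount, filter_cons]
  by_cases h : ρ.idxOf i < ρ.idxOf j <;> simp [h, Nat.add_comm]

lemma prefCount_append (R S : List (List ℕ)) (i j : ℕ) :
    prefCount (R ++ S) i j = prefCount R i j + prefCount S i j := by
  simp [prefCount, filter_append]

lemma prefCount_eq_countP (R : List (List ℕ)) (i j : ℕ) :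
    prefCount R i j = R.countP (fun ρ => decide (ρ.idxOf i < ρ.idxOf j)) := by
  simp [prefCount, countP_eq_length_filter]

lemma indexOf_map_add (l : List ℕ) (a c : ℕ) :
    (l.map (· + c)).idxOf (a + c) = l.idxOf a := by
  induction l with
  | nil => rfl
  | cons x xs ih =>
    simp only [map_cons, idxOf_cons, cond_eq_if, beq_iff_eq, ih]
    have hc : (x + c = a + c) ↔ x = a := by omega
    simp [hc]

lemma indexOf_ne_indexOf {ρ : List ℕ} {i j : ℕ} (hij : i ≠ j) (hi : i ∈ ρ) :
    ρ.idxOf i ≠ ρ.idxOf j := by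
  intro h
  have h1 : ρ.idxOf i < ρ.length := idxOf_lt_length_iff.2 hi
  have h2 : ρ.idxOf j < ρ.length := h ▸ h1
  have e1 : ρ[ρ.idxOf i] = i := getElem_idxOf h1
  have e2 : ρ[ρ.idxOf j] = j := getElem_idxOf h2
  have e3 : ρ[ρ.idxOf i] = ρ[ρ.idxOf j] := by simp only [h]
  rw [e1, e2] at e3
  exact hij e3

lemma prefCount_add_prefCount {R : List (List ℕ)} {i j : ℕ} (hij : i ≠ j)
    (h : ∀ ρ ∈ R, i ∈ ρ) :
    prefCount R i j + prefCount R j i = R.length := by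
  induction R with
  | nil => rfl
  | cons ρ R ih =>
    have hne := indexOf_ne_indexOf hij (h ρ (by simp))
    have := ih (fun σ hσ => h σ (by simp [hσ]))
    rw [prefCount_cons, prefCount_cons, length_cons]
    split_ifs with h1 h2 h2 <;> omega

lemma indexOf_map_range {f : ℕ → ℕ} (hf : Function.Injective f) {t h : ℕ} (ht : t < h) :
    ((List.range h).map f).idxOf (f t) = t := by
  set l := (List.range h).map f with hl
  have hnd : l.Nodup := (nodup_range (n := h)).map hf
  have hlen : l.length = h := by simp [hl]
  have htl : t < l.length := by omega
  have hget : l[t] = f t := by simp [hl]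
  have hmem : f t ∈ l := by
    rw [hl]; exact mem_map_of_mem (f := f) (mem_range.2 ht)
  have hq : l.idxOf (f t) < l.length := idxOf_lt_length_iff.2 hmem
  have : l[l.idxOf (f t)] = l[t] := by rw [getElem_idxOf hq, hget]
  exact (hnd.getElem_inj_iff).1 this

lemma indexOf_reverse {l : List ℕ} (hn : l.Nodup) {i : ℕ} (hi : i ∈ l) :
    l.reverse.idxOf i = l.length - 1 - l.idxOf i := by
  have hp : l.idxOf i < l.length := idxOf_lt_length_iff.2 hi
  have hlen : l.reverse.length = l.length := by simp
  have h1 : l.length - 1 - (l.length - 1 - l.idxOf i) = l.idxOf i := by omega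
  have hlt : l.length - 1 - l.idxOf i < l.reverse.length := by omega
  have hget : l.reverse[l.length - 1 - l.idxOf i] = i := by
    rw [getElem_reverse]
    simp only [h1]
    exact getElem_idxOf hp
  have hmem : i ∈ l.reverse := by simpa using hi
  have hq : l.reverse.idxOf i < l.reverse.length := idxOf_lt_length_iff.2 hmem
  have : l.reverse[l.reverse.idxOf i] = l.reverse[l.length - 1 - l.idxOf i] := by
    rw [getElem_idxOf hq, hget]
  exact ((nodup_reverse.2 hn).getElem_inj_iff).1 this

lemma pow_fact (k : ℕ) : (2:ℕ)^(k+2) = 2*2^(k+1) ∧ (2:ℕ)^(k+3) = 4*2^(k+1) := by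
  constructor <;> ring

@[simp] lemma len_Aodd (k : ℕ) : (Aodd k).length = 2^(k+1) := by simp [Aodd]
@[simp] lemma len_Aeven (k : ℕ) : (Aeven k).length = 2^(k+1) := by simp [Aeven]
@[simp] lemma len_Bodd (k : ℕ) : (Bodd k).length = 2^(k+1) := by simp [Bodd]
@[simp] lemma len_Beven (k : ℕ) : (Beven k).length = 2^(k+1) := by simp [Beven]

lemma mem_Aodd {k i : ℕ} : i ∈ Aodd k ↔ i % 2 = 1 ∧ i ≤ 2^(k+2) := by
  have h := pow_fact k
  simp only [Aodd, List.mem_map, List.mem_range]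
  constructor
  · rintro ⟨t, ht, rfl⟩; omega
  · rintro ⟨h1, h2⟩; exact ⟨(i-1)/2, by omega, by omega⟩

lemma mem_Aeven {k i : ℕ} : i ∈ Aeven k ↔ i % 2 = 0 ∧ 1 ≤ i ∧ i ≤ 2^(k+2) := by
  have h := pow_fact k
  simp only [Aeven, List.mem_map, List.mem_range]
  constructor
  · rintro ⟨t, ht, rfl⟩; omega
  · rintro ⟨h1, h2, h3⟩; exact ⟨(i-2)/2, by omega, by omega⟩

lemma mem_Bodd {k i : ℕ} : i ∈ Bodd k ↔ i % 2 = 1 ∧ 2^(k+2) < i ∧ i ≤ 2^(k+3) := by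
  have h := pow_fact k
  simp only [Bodd, List.mem_map, mem_Aodd]
  constructor
  · rintro ⟨t, ⟨h1, h2⟩, rfl⟩; omega
  · rintro ⟨h1, h2, h3⟩; exact ⟨i - 2^(k+2), ⟨by omega, by omega⟩, by omega⟩

lemma mem_Beven {k i : ℕ} : i ∈ Beven k ↔ i % 2 = 0 ∧ 2^(k+2) < i ∧ i ≤ 2^(k+3) := by
  have h := pow_fact k
  simp only [Beven, List.mem_map, mem_Aeven]
  constructor
  · rintro ⟨t, ⟨h1, h2, h3⟩, rfl⟩; omega
  · rintro ⟨h1, h2, h3⟩; exact ⟨i - 2^(k+2), ⟨by omega, by omega, by omega⟩, by omega⟩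

lemma nodup_Aodd (k : ℕ) : (Aodd k).Nodup :=
  (List.nodup_range).map (fun a b h => by omega)
lemma nodup_Aeven (k : ℕ) : (Aeven k).Nodup :=
  (List.nodup_range).map (fun a b h => by omega)
lemma nodup_Bodd (k : ℕ) : (Bodd k).Nodup :=
  (nodup_Aodd k).map (fun a b h => by omega)
lemma nodup_Beven (k : ℕ) : (Beven k).Nodup :=
  (nodup_Aeven k).map (fun a b h => by omega)

lemma indexOf_Aodd {k i : ℕ} (h1 : i % 2 = 1) (h2 : i ≤ 2^(k+2)) :
    (Aodd k).idxOf i = (i-1)/2 := by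
  have h := pow_fact k
  have hi : i = 2*((i-1)/2)+1 := by omega
  rw [Aodd]
  conv_lhs => rw [hi]
  exact indexOf_map_range (f := fun t => 2*t+1) (t := (i-1)/2) (h := 2^(k+1))
    (fun a b hh => by simp only [] at hh; omega) (by omega)

lemma indexOf_Aeven {k i : ℕ} (h1 : i % 2 = 0) (h0 : 1 ≤ i) (h2 : i ≤ 2^(k+2)) :
    (Aeven k).idxOf i = (i-1)/2 := by
  have h := pow_fact k
  have hi : i = 2*((i-1)/2)+2 := by omega
  rw [Aeven]
  conv_lhs => rw [hi]
  exact indexOf_map_range (f := fun t => 2*t+2) (t := (i-1)/2) (h := 2^(k+1))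
    (fun a b hh => by simp only [] at hh; omega) (by omega)

lemma indexOf_Bodd {k i : ℕ} (h1 : i % 2 = 1) (h2 : 2^(k+2) < i) (h3 : i ≤ 2^(k+3)) :
    (Bodd k).idxOf i = (i-1)/2 - 2^(k+1) := by
  have h := pow_fact k
  have hi : i = (i - 2^(k+2)) + 2^(k+2) := by omega
  rw [Bodd]
  conv_lhs => rw [hi]
  rw [indexOf_map_add, indexOf_Aodd (by omega) (by omega)]
  omega

lemma indexOf_Beven {k i : ℕ} (h1 : i % 2 = 0) (h2 : 2^(k+2) < i) (h3 : i ≤ 2^(k+3)) :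
    (Beven k).idxOf i = (i-1)/2 - 2^(k+1) := by
  have h := pow_fact k
  have hi : i = (i - 2^(k+2)) + 2^(k+2) := by omega
  rw [Beven]
  conv_lhs => rw [hi]
  rw [indexOf_map_add, indexOf_Aeven (by omega) (by omega) (by omega)]
  omega

lemma indexOf_Aodd_rev {k i : ℕ} (h1 : i % 2 = 1) (h2 : i ≤ 2^(k+2)) :
    (Aodd k).reverse.idxOf i = 2^(k+1) - 1 - (i-1)/2 := by
  rw [indexOf_reverse (nodup_Aodd k) (mem_Aodd.2 ⟨h1, h2⟩), len_Aodd,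
    indexOf_Aodd h1 h2]

lemma indexOf_Aeven_rev {k i : ℕ} (h1 : i % 2 = 0) (h0 : 1 ≤ i) (h2 : i ≤ 2^(k+2)) :
    (Aeven k).reverse.idxOf i = 2^(k+1) - 1 - (i-1)/2 := by
  rw [indexOf_reverse (nodup_Aeven k) (mem_Aeven.2 ⟨h1, h0, h2⟩), len_Aeven,
    indexOf_Aeven h1 h0 h2]

lemma indexOf_Bodd_rev {k i : ℕ} (h1 : i % 2 = 1) (h2 : 2^(k+2) < i) (h3 : i ≤ 2^(k+3)) :
    (Bodd k).reverse.idxOf i = 2^(k+1) - 1 - ((i-1)/2 - 2^(k+1)) := by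
  rw [indexOf_reverse (nodup_Bodd k) (mem_Bodd.2 ⟨h1, h2, h3⟩), len_Bodd,
    indexOf_Bodd h1 h2 h3]

lemma indexOf_Beven_rev {k i : ℕ} (h1 : i % 2 = 0) (h2 : 2^(k+2) < i) (h3 : i ≤ 2^(k+3)) :
    (Beven k).reverse.idxOf i = 2^(k+1) - 1 - ((i-1)/2 - 2^(k+1)) := by
  rw [indexOf_reverse (nodup_Beven k) (mem_Beven.2 ⟨h1, h2, h3⟩), len_Beven,
    indexOf_Beven h1 h2 h3]

lemma indexOf_v1 {k i : ℕ} (h0 : 1 ≤ i) (h3 : i ≤ 2^(k+3)) :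
    (v1 k).idxOf i =
      (if i % 2 = 1 then 0 else 2^(k+2)) + (if i ≤ 2^(k+2) then 0 else 2^(k+1))
        + ((i-1)/2 - (if i ≤ 2^(k+2) then 0 else 2^(k+1))) := by
  have h := pow_fact k
  rw [v1, List.append_assoc, List.append_assoc]
  rcases Nat.mod_two_eq_zero_or_one i with hp | hp <;> by_cases hs : i ≤ 2^(k+2)
  · rw [List.idxOf_append_of_notMem (by simp only [mem_Aodd]; omega),
      List.idxOf_append_of_notMem (by simp only [mem_Bodd]; omega),
      List.idxOf_append_of_mem (mem_Aeven.2 ⟨hp, h0, hs⟩),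
      indexOf_Aeven hp h0 hs]
    simp only [len_Aodd, len_Bodd]
    split_ifs <;> omega
  · rw [List.idxOf_append_of_notMem (by simp only [mem_Aodd]; omega),
      List.idxOf_append_of_notMem (by simp only [mem_Bodd]; omega),
      List.idxOf_append_of_notMem (by simp only [mem_Aeven]; omega),
      indexOf_Beven hp (by omega) h3]
    simp only [len_Aodd, len_Bodd, len_Aeven]
    split_ifs <;> omega
  · rw [List.idxOf_append_of_mem (mem_Aodd.2 ⟨hp, hs⟩), indexOf_Aodd hp hs]
    split_ifs <;> omega
  · rw [List.idxOf_append_of_notMem (by simp only [mem_Aodd]; omega),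
      List.idxOf_append_of_mem (mem_Bodd.2 ⟨hp, by omega, h3⟩),
      indexOf_Bodd hp (by omega) h3]
    simp only [len_Aodd]
    split_ifs <;> omega

lemma indexOf_v2 {k i : ℕ} (h0 : 1 ≤ i) (h3 : i ≤ 2^(k+3)) :
    (v2 k).idxOf i =
      (if i % 2 = 1 then 2^(k+2) else 0) + (if i ≤ 2^(k+2) then 0 else 2^(k+1))
        + (2^(k+1) - 1 - ((i-1)/2 - (if i ≤ 2^(k+2) then 0 else 2^(k+1)))) := by
  have h := pow_fact k
  rw [v2, List.append_assoc, List.append_assoc]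
  rcases Nat.mod_two_eq_zero_or_one i with hp | hp <;> by_cases hs : i ≤ 2^(k+2)
  · rw [List.idxOf_append_of_mem (by simp only [List.mem_reverse, mem_Aeven]; omega),
      indexOf_Aeven_rev hp (by omega) hs]
    split_ifs <;> omega
  · rw [List.idxOf_append_of_notMem (by simp only [List.mem_reverse, mem_Aeven]; omega),
      List.idxOf_append_of_mem (by simp only [List.mem_reverse, mem_Beven]; omega),
      indexOf_Beven_rev hp (by omega) h3]
    simp only [List.length_reverse, len_Aeven]
    split_ifs <;> omega
  · rw [List.idxOf_append_of_notMem (by simp only [List.mem_reverse, mem_Aeven]; omega),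
      List.idxOf_append_of_notMem (by simp only [List.mem_reverse, mem_Beven]; omega),
      List.idxOf_append_of_mem (by simp only [List.mem_reverse, mem_Aodd]; omega),
      indexOf_Aodd_rev hp hs]
    simp only [List.length_reverse, len_Aeven, len_Beven]
    split_ifs <;> omega
  · rw [List.idxOf_append_of_notMem (by simp only [List.mem_reverse, mem_Aeven]; omega),
      List.idxOf_append_of_notMem (by simp only [List.mem_reverse, mem_Beven]; omega),
      List.idxOf_append_of_notMem (by simp only [List.mem_reverse, mem_Aodd]; omega),
      indexOf_Bodd_rev hp (by omega) h3]
    simp only [List.length_reverse, len_Aeven, len_Beven, len_Aodd]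
    split_ifs <;> omega

lemma indexOf_v3 {k i : ℕ} (h0 : 1 ≤ i) (h3 : i ≤ 2^(k+3)) :
    (v3 k).idxOf i =
      (if i % 2 = 1 then (if i ≤ 2^(k+2) then 3*2^(k+1) else 0)
        else (if i ≤ 2^(k+2) then 2^(k+1) else 2*2^(k+1)))
        + ((i-1)/2 - (if i ≤ 2^(k+2) then 0 else 2^(k+1))) := by
  have h := pow_fact k
  rw [v3, List.append_assoc, List.append_assoc]
  rcases Nat.mod_two_eq_zero_or_one i with hp | hp <;> by_cases hs : i ≤ 2^(k+2)
  · rw [List.idxOf_append_of_notMem (by simp only [mem_Bodd]; omega),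
      List.idxOf_append_of_mem (mem_Aeven.2 ⟨hp, h0, hs⟩),
      indexOf_Aeven hp h0 hs]
    simp only [len_Bodd]
    split_ifs <;> omega
  · rw [List.idxOf_append_of_notMem (by simp only [mem_Bodd]; omega),
      List.idxOf_append_of_notMem (by simp only [mem_Aeven]; omega),
      List.idxOf_append_of_mem (mem_Beven.2 ⟨hp, by omega, h3⟩),
      indexOf_Beven hp (by omega) h3]
    simp only [len_Bodd, len_Aeven]
    split_ifs <;> omega
  · rw [List.idxOf_append_of_notMem (by simp only [mem_Bodd]; omega),
      List.idxOf_append_of_notMem (by simp only [mem_Aeven]; omega),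
      List.idxOf_append_of_notMem (by simp only [mem_Beven]; omega),
      indexOf_Aodd hp hs]
    simp only [len_Bodd, len_Aeven, len_Beven]
    split_ifs <;> omega
  · rw [List.idxOf_append_of_mem (mem_Bodd.2 ⟨hp, by omega, h3⟩),
      indexOf_Bodd hp (by omega) h3]
    split_ifs <;> omega

lemma indexOf_v4 {k i : ℕ} (h0 : 1 ≤ i) (h3 : i ≤ 2^(k+3)) :
    (v4 k).idxOf i =
      (if i % 2 = 1 then (if i ≤ 2^(k+2) then 2^(k+1) else 2*2^(k+1))
        else (if i ≤ 2^(k+2) then 3*2^(k+1) else 0))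
        + (2^(k+1) - 1 - ((i-1)/2 - (if i ≤ 2^(k+2) then 0 else 2^(k+1)))) := by
  have h := pow_fact k
  rw [v4, List.append_assoc, List.append_assoc]
  rcases Nat.mod_two_eq_zero_or_one i with hp | hp <;> by_cases hs : i ≤ 2^(k+2)
  · rw [List.idxOf_append_of_notMem (by simp only [List.mem_reverse, mem_Beven]; omega),
      List.idxOf_append_of_notMem (by simp only [List.mem_reverse, mem_Aodd]; omega),
      List.idxOf_append_of_notMem (by simp only [List.mem_reverse, mem_Bodd]; omega),
      indexOf_Aeven_rev hp (by omega) hs]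
    simp only [List.length_reverse, len_Beven, len_Aodd, len_Bodd]
    split_ifs <;> omega
  · rw [List.idxOf_append_of_mem (by simp only [List.mem_reverse, mem_Beven]; omega),
      indexOf_Beven_rev hp (by omega) h3]
    split_ifs <;> omega
  · rw [List.idxOf_append_of_notMem (by simp only [List.mem_reverse, mem_Beven]; omega),
      List.idxOf_append_of_mem (by simp only [List.mem_reverse, mem_Aodd]; omega),
      indexOf_Aodd_rev hp hs]
    simp only [List.length_reverse, len_Beven]
    split_ifs <;> omega
  · rw [List.idxOf_append_of_notMem (by simp only [List.mem_reverse, mem_Beven]; omega),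
      List.idxOf_append_of_notMem (by simp only [List.mem_reverse, mem_Aodd]; omega),
      List.idxOf_append_of_mem (by simp only [List.mem_reverse, mem_Bodd]; omega),
      indexOf_Bodd_rev hp (by omega) h3]
    simp only [List.length_reverse, len_Beven, len_Aodd]
    split_ifs <;> omega

set_option maxHeartbeats 2000000 in
lemma count4_eq (k : ℕ) {i j : ℕ} (hi0 : 1 ≤ i) (hi3 : i ≤ 2^(k+3))
    (hj0 : 1 ≤ j) (hj3 : j ≤ 2^(k+3)) (hij : i ≠ j) :
    prefCount [v1 k, v2 k, v3 k, v4 k] i j =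
      if i ≤ 2^(k+2) ∧ j ≤ 2^(k+2) then 2
      else if 2^(k+2) < i ∧ 2^(k+2) < j then 2
      else if i ≤ 2^(k+2) then (if (i+j) % 2 = 0 then 3 else 1)
      else (if (i+j) % 2 = 0 then 1 else 3) := by
  have h := pow_fact k
  rw [prefCount_cons, prefCount_cons, prefCount_cons, prefCount_cons, prefCount_nil,
    indexOf_v1 hi0 hi3, indexOf_v1 hj0 hj3, indexOf_v2 hi0 hi3, indexOf_v2 hj0 hj3,
    indexOf_v3 hi0 hi3, indexOf_v3 hj0 hj3, indexOf_v4 hi0 hi3, indexOf_v4 hj0 hj3]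
  rcases Nat.mod_two_eq_zero_or_one i with hp | hp <;>
    rcases Nat.mod_two_eq_zero_or_one j with hq | hq <;>
      simp only [hp, hq, Nat.one_ne_zero, Nat.zero_ne_one, if_true, if_false,
        reduceIte] <;>
    split_ifs <;> omega

lemma nodup_four {W X Y Z : List ℕ} (hW : W.Nodup) (hX : X.Nodup) (hY : Y.Nodup)
    (hZ : Z.Nodup) (dWX : W.Disjoint X) (dWY : W.Disjoint Y) (dWZ : W.Disjoint Z)
    (dXY : X.Disjoint Y) (dXZ : X.Disjoint Z) (dYZ : Y.Disjoint Z) :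
    (W ++ X ++ Y ++ Z).Nodup := by
  simp only [List.nodup_append, List.disjoint_append_left]
  refine ⟨⟨⟨hW, hX, fun a ha b hb e => dWX ha (e ▸ hb)⟩, hY, fun a ha b hb e => ?_⟩, hZ,
    fun a ha b hb e => ?_⟩ <;> subst e
  · rcases List.mem_append.1 ha with h | h
    · exact dWY h hb
    · exact dXY h hb
  · rcases List.mem_append.1 ha with h | h
    · rcases List.mem_append.1 h with h | h
      · exact dWZ h hb
      · exact dXZ h hb
    · exact dYZ h hb

section
variable (k : ℕ)

private lemma dAoAe : (Aodd k).Disjoint (Aeven k) :=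
  fun a ha hb => by rw [mem_Aodd] at ha; rw [mem_Aeven] at hb; omega
private lemma dAoBo : (Aodd k).Disjoint (Bodd k) :=
  fun a ha hb => by rw [mem_Aodd] at ha; rw [mem_Bodd] at hb; omega
private lemma dAoBe : (Aodd k).Disjoint (Beven k) :=
  fun a ha hb => by rw [mem_Aodd] at ha; rw [mem_Beven] at hb; omega
private lemma dAeBo : (Aeven k).Disjoint (Bodd k) :=
  fun a ha hb => by rw [mem_Aeven] at ha; rw [mem_Bodd] at hb; omega
private lemma dAeBe : (Aeven k).Disjoint (Beven k) :=
  fun a ha hb => by rw [mem_Aeven] at ha; rw [mem_Beven] at hb; omega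
private lemma dBoBe : (Bodd k).Disjoint (Beven k) :=
  fun a ha hb => by rw [mem_Bodd] at ha; rw [mem_Beven] at hb; omega

private lemma drev {X Y : List ℕ} (d : X.Disjoint Y) : X.reverse.Disjoint Y.reverse :=
  fun a ha hb => d (by simpa using ha) (by simpa using hb)

lemma nodup_v1 : (v1 k).Nodup :=
  nodup_four (nodup_Aodd k) (nodup_Bodd k) (nodup_Aeven k) (nodup_Beven k)
    (dAoBo k) (dAoAe k) (dAoBe k) ((dAeBo k).symm) (dBoBe k) (dAeBe k)

lemma nodup_v2 : (v2 k).Nodup :=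
  nodup_four (List.nodup_reverse.2 (nodup_Aeven k)) (List.nodup_reverse.2 (nodup_Beven k))
    (List.nodup_reverse.2 (nodup_Aodd k)) (List.nodup_reverse.2 (nodup_Bodd k))
    (drev (dAeBe k)) (drev ((dAoAe k).symm)) (drev ((dAeBo k)))
    (drev ((dAoBe k).symm)) (drev ((dBoBe k).symm)) (drev (dAoBo k))

lemma nodup_v3 : (v3 k).Nodup :=
  nodup_four (nodup_Bodd k) (nodup_Aeven k) (nodup_Beven k) (nodup_Aodd k)
    ((dAeBo k).symm) (dBoBe k) ((dAoBo k).symm) (dAeBe k) ((dAoAe k).symm)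
    ((dAoBe k).symm)

lemma nodup_v4 : (v4 k).Nodup :=
  nodup_four (List.nodup_reverse.2 (nodup_Beven k)) (List.nodup_reverse.2 (nodup_Aodd k))
    (List.nodup_reverse.2 (nodup_Bodd k)) (List.nodup_reverse.2 (nodup_Aeven k))
    (drev ((dAoBe k).symm)) (drev ((dBoBe k).symm)) (drev ((dAeBe k).symm))
    (drev (dAoBo k)) (drev (dAoAe k)) (drev ((dAeBo k).symm))

end

lemma mem_v1 {k i : ℕ} : i ∈ v1 k ↔ 1 ≤ i ∧ i ≤ 2^(k+3) := by
  have h := pow_fact k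
  simp only [v1, List.mem_append, mem_Aodd, mem_Aeven, mem_Bodd, mem_Beven]
  omega

lemma mem_v2 {k i : ℕ} : i ∈ v2 k ↔ 1 ≤ i ∧ i ≤ 2^(k+3) := by
  have h := pow_fact k
  simp only [v2, List.mem_append, List.mem_reverse, mem_Aodd, mem_Aeven, mem_Bodd,
    mem_Beven]
  omega

lemma mem_v3 {k i : ℕ} : i ∈ v3 k ↔ 1 ≤ i ∧ i ≤ 2^(k+3) := by
  have h := pow_fact k
  simp only [v3, List.mem_append, mem_Aodd, mem_Aeven, mem_Bodd, mem_Beven]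
  omega

lemma mem_v4 {k i : ℕ} : i ∈ v4 k ↔ 1 ≤ i ∧ i ≤ 2^(k+3) := by
  have h := pow_fact k
  simp only [v4, List.mem_append, List.mem_reverse, mem_Aodd, mem_Aeven, mem_Bodd,
    mem_Beven]
  omega

lemma v1_perm (k : ℕ) : (v1 k).Perm (List.range' 1 (2^(k+3))) :=
  (List.perm_ext_iff_of_nodup (nodup_v1 k) List.nodup_range').2
    (fun a => by rw [mem_v1, List.mem_range'_1]; omega)
lemma v2_perm (k : ℕ) : (v2 k).Perm (List.range' 1 (2^(k+3))) :=
  (List.perm_ext_iff_of_nodup (nodup_v2 k) List.nodup_range').2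
    (fun a => by rw [mem_v2, List.mem_range'_1]; omega)
lemma v3_perm (k : ℕ) : (v3 k).Perm (List.range' 1 (2^(k+3))) :=
  (List.perm_ext_iff_of_nodup (nodup_v3 k) List.nodup_range').2
    (fun a => by rw [mem_v3, List.mem_range'_1]; omega)
lemma v4_perm (k : ℕ) : (v4 k).Perm (List.range' 1 (2^(k+3))) :=
  (List.perm_ext_iff_of_nodup (nodup_v4 k) List.nodup_range').2
    (fun a => by rw [mem_v4, List.mem_range'_1]; omega)

lemma length_bowtie {P Q : List (List ℕ)} (h : P.length = Q.length) :
    (bowtie P Q).length = P.length := by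
  simp [bowtie, h]

lemma dropLast_map' {α β : Type} (f : α → β) (l : List α) :
    (l.map f).dropLast = l.dropLast.map f := by
  apply List.ext_getElem
  · simp
  · intro s h1 h2
    simp [List.getElem_dropLast, List.getElem_map]

lemma bowtie_dropLast {P Q : List (List ℕ)} (h : P.length = Q.length) :
    (bowtie P Q).dropLast = bowtie P.dropLast Q.dropLast := by
  apply List.ext_getElem
  · simp [bowtie, h]
  · intro s h1 h2
    simp only [bowtie, List.getElem_dropLast, List.getElem_map, List.getElem_zipIdx, Prod.fst_swap, Prod.snd_swap,
      List.getElem_zip]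

lemma bowtie_eq (P : List (List ℕ)) (g : List ℕ → List ℕ) :
    bowtie P (P.map g) =
      P.enum.map (fun p => if p.1 % 2 = 0 then p.2 ++ g p.2 else g p.2 ++ p.2) := by
  rw [bowtie, ← List.enum.eq_1]
  have h1 := List.zip_map' (f := id) (g := g) (l := P)
  rw [List.map_id] at h1
  rw [h1, List.enum_map, List.map_map]
  apply List.map_congr_left
  rintro ⟨k, ρ⟩ hp
  rfl

lemma prefCount_bowtie_eq_countP (P : List (List ℕ)) (g : List ℕ → List ℕ) (i j : ℕ) :
    prefCount (bowtie P (P.map g)) i j =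
      P.enum.countP (fun p =>
        decide ((if p.1 % 2 = 0 then p.2 ++ g p.2 else g p.2 ++ p.2).idxOf i <
          (if p.1 % 2 = 0 then p.2 ++ g p.2 else g p.2 ++ p.2).idxOf j)) := by
  rw [bowtie_eq, prefCount_eq_countP, List.countP_map]
  rfl

lemma countP_even_range (L : ℕ) :
    (List.range L).countP (fun k => decide (k % 2 = 0)) = (L+1)/2 := by
  induction L with
  | zero => rfl
  | succ L ih =>
    rw [List.range_succ, List.countP_append, ih]
    simp only [List.countP_cons, List.countP_nil]
    rcases Nat.mod_two_eq_zero_or_one L with h | h <;> simp [h] <;> omega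

lemma countP_odd_range (L : ℕ) :
    (List.range L).countP (fun k => decide (k % 2 = 1)) = L/2 := by
  induction L with
  | zero => rfl
  | succ L ih =>
    rw [List.range_succ, List.countP_append, ih]
    simp only [List.countP_cons, List.countP_nil]
    rcases Nat.mod_two_eq_zero_or_one L with h | h <;> simp [h] <;> omega

lemma countP_enum_snd (P : List (List ℕ)) (pred : ℕ × List ℕ → Bool) (q : List ℕ → Bool)
    (h : ∀ p ∈ P.enum, pred p = q p.2) :
    P.enum.countP pred = P.countP q := by
  rw [List.countP_congr (fun p hp => by rw [h p hp])]
  rw [show (fun p : ℕ × List ℕ => q p.2) = q ∘ Prod.snd from rfl, ← List.countP_map,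
    List.enum_map_snd]

lemma countP_enum_fst (P : List (List ℕ)) (pred : ℕ × List ℕ → Bool) (q : ℕ → Bool)
    (h : ∀ p ∈ P.enum, pred p = q p.1) :
    P.enum.countP pred = (List.range P.length).countP q := by
  rw [List.countP_congr (fun p hp => by rw [h p hp])]
  rw [show (fun p : ℕ × List ℕ => q p.1) = q ∘ Prod.fst from rfl, ← List.countP_map,
    List.enum_map_fst]

lemma sndMemEnum {P : List (List ℕ)} {p : ℕ × List ℕ} (hp : p ∈ P.enum) :
    p.2 ∈ P := by
  have := List.mem_map_of_mem (f := Prod.snd) hp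
  rwa [List.enum_map_snd] at this

lemma shift_mem {ρ : List ℕ} {m j : ℕ} (hj : m < j)
    (hmem : j - m ∈ ρ) : j ∈ ρ.map (· + m) := by
  rw [show j = (j-m)+m by omega]
  exact List.mem_map_of_mem hmem

-- row membership characterization
lemma row_mem {P : List (List ℕ)} {m : ℕ} (hP : ∀ ρ ∈ P, ρ.Perm (List.range' 1 m))
    {ρ : List ℕ} (hρ : ρ ∈ P) (x : ℕ) : x ∈ ρ ↔ 1 ≤ x ∧ x ≤ m := by
  rw [(hP ρ hρ).mem_iff, List.mem_range'_1]
  omega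

lemma not_mem_shift {ρ : List ℕ} {m x : ℕ} (hx : x ≤ m)
    (h : ∀ a ∈ ρ, 1 ≤ a) : x ∉ ρ.map (· + m) := by
  intro hmem
  obtain ⟨a, ha, rfl⟩ := List.mem_map.1 hmem
  have := h a ha
  omega

lemma bowtie_small {P : List (List ℕ)} {m i j : ℕ}
    (hP : ∀ ρ ∈ P, ρ.Perm (List.range' 1 m))
    (hi : 1 ≤ i) (hi2 : i ≤ m) (hj : 1 ≤ j) (hj2 : j ≤ m) :
    prefCount (bowtie P (P.map (List.map (· + m)))) i j = prefCount P i j := by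
  rw [prefCount_bowtie_eq_countP, prefCount_eq_countP]
  apply countP_enum_snd
  rintro ⟨k, ρ⟩ hp
  have hρ : ρ ∈ P := sndMemEnum hp
  have hm := row_mem hP hρ
  have hone : ∀ a ∈ ρ, 1 ≤ a := fun a ha => ((hm a).1 ha).1
  simp only []
  by_cases hk : k % 2 = 0
  · rw [if_pos hk, List.idxOf_append_of_mem ((hm i).2 ⟨hi, hi2⟩),
      List.idxOf_append_of_mem ((hm j).2 ⟨hj, hj2⟩)]
  · rw [if_neg hk, List.idxOf_append_of_notMem (not_mem_shift hi2 hone),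
      List.idxOf_append_of_notMem (not_mem_shift hj2 hone)]
    simp [Nat.add_lt_add_iff_left]

lemma bowtie_large {P : List (List ℕ)} {m i j : ℕ}
    (hP : ∀ ρ ∈ P, ρ.Perm (List.range' 1 m))
    (hi : m < i) (hi2 : i ≤ m + m) (hj : m < j) (hj2 : j ≤ m + m) :
    prefCount (bowtie P (P.map (List.map (· + m)))) i j = prefCount P (i-m) (j-m) := by
  rw [prefCount_bowtie_eq_countP, prefCount_eq_countP]
  apply countP_enum_snd
  rintro ⟨k, ρ⟩ hp
  have hρ : ρ ∈ P := sndMemEnum hp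
  have hm := row_mem hP hρ
  have hinotρ : i ∉ ρ := fun hc => by have := (hm i).1 hc; omega
  have hjnotρ : j ∉ ρ := fun hc => by have := (hm j).1 hc; omega
  have hieq : i = (i - m) + m := by omega
  have hjeq : j = (j - m) + m := by omega
  have himem : i ∈ ρ.map (· + m) := by
    rw [hieq]; exact List.mem_map_of_mem ((hm (i-m)).2 ⟨by omega, by omega⟩)
  have hjmem : j ∈ ρ.map (· + m) := by
    rw [hjeq]; exact List.mem_map_of_mem ((hm (j-m)).2 ⟨by omega, by omega⟩)
  simp only []
  by_cases hk : k % 2 = 0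
  · rw [if_pos hk, List.idxOf_append_of_notMem hinotρ,
      List.idxOf_append_of_notMem hjnotρ]
    conv_lhs => rw [hieq, hjeq, indexOf_map_add, indexOf_map_add]
    simp [Nat.add_lt_add_iff_left]
  · rw [if_neg hk, List.idxOf_append_of_mem himem, List.idxOf_append_of_mem hjmem]
    conv_lhs => rw [hieq, hjeq, indexOf_map_add, indexOf_map_add]

lemma bowtie_mixed₁ {P : List (List ℕ)} {m i j : ℕ}
    (hP : ∀ ρ ∈ P, ρ.Perm (List.range' 1 m))
    (hi : 1 ≤ i) (hi2 : i ≤ m) (hj : m < j) (hj2 : j ≤ m + m) :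
    prefCount (bowtie P (P.map (List.map (· + m)))) i j = (P.length + 1)/2 := by
  rw [prefCount_bowtie_eq_countP, ← countP_even_range P.length]
  apply countP_enum_fst
  rintro ⟨k, ρ⟩ hp
  have hρ : ρ ∈ P := sndMemEnum hp
  have hm := row_mem hP hρ
  have hone : ∀ a ∈ ρ, 1 ≤ a := fun a ha => ((hm a).1 ha).1
  have himem : i ∈ ρ := (hm i).2 ⟨hi, hi2⟩
  have hjnotρ : j ∉ ρ := fun hc => by have := (hm j).1 hc; omega
  have hilt : ρ.idxOf i < ρ.length := List.idxOf_lt_length_iff.2 himem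
  have hjmem : j ∈ ρ.map (· + m) := shift_mem hj ((hm (j-m)).2 ⟨by omega, by omega⟩)
  have hjlt : (ρ.map (· + m)).idxOf j < (ρ.map (· + m)).length :=
    List.idxOf_lt_length_iff.2 hjmem
  simp only [List.length_map] at hjlt
  by_cases hk : k % 2 = 0
  · rw [if_pos hk, List.idxOf_append_of_mem himem,
      List.idxOf_append_of_notMem hjnotρ]
    simp [hk]
    omega
  · rw [if_neg hk, List.idxOf_append_of_notMem (not_mem_shift hi2 hone),
      List.idxOf_append_of_mem hjmem]
    simp [hk]
    omega

lemma bowtie_mixed₂ {P : List (List ℕ)} {m i j : ℕ}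
    (hP : ∀ ρ ∈ P, ρ.Perm (List.range' 1 m))
    (hi : 1 ≤ i) (hi2 : i ≤ m) (hj : m < j) (hj2 : j ≤ m + m) :
    prefCount (bowtie P (P.map (List.map (· + m)))) j i = P.length/2 := by
  rw [prefCount_bowtie_eq_countP, ← countP_odd_range P.length]
  apply countP_enum_fst
  rintro ⟨k, ρ⟩ hp
  have hρ : ρ ∈ P := sndMemEnum hp
  have hm := row_mem hP hρ
  have hone : ∀ a ∈ ρ, 1 ≤ a := fun a ha => ((hm a).1 ha).1
  have himem : i ∈ ρ := (hm i).2 ⟨hi, hi2⟩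
  have hjnotρ : j ∉ ρ := fun hc => by have := (hm j).1 hc; omega
  have hilt : ρ.idxOf i < ρ.length := List.idxOf_lt_length_iff.2 himem
  have hjmem : j ∈ ρ.map (· + m) := shift_mem hj ((hm (j-m)).2 ⟨by omega, by omega⟩)
  have hjlt : (ρ.map (· + m)).idxOf j < (ρ.map (· + m)).length :=
    List.idxOf_lt_length_iff.2 hjmem
  simp only [List.length_map] at hjlt
  by_cases hk : k % 2 = 0
  · rw [if_pos hk, List.idxOf_append_of_mem himem,
      List.idxOf_append_of_notMem hjnotρ]
    simp [hk]
    omega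
  · have hk1 : k % 2 = 1 := by omega
    rw [if_neg hk, List.idxOf_append_of_notMem (not_mem_shift hi2 hone),
      List.idxOf_append_of_mem hjmem]
    simp [hk1]
    omega

lemma bowtie_rows {P : List (List ℕ)} {m : ℕ}
    (hP : ∀ ρ ∈ P, ρ.Perm (List.range' 1 m)) :
    ∀ σ ∈ bowtie P (P.map (List.map (· + m))), σ.Perm (List.range' 1 (m+m)) := by
  intro σ hσ
  rw [bowtie_eq] at hσ
  obtain ⟨⟨k, ρ⟩, hp, rfl⟩ := List.mem_map.1 hσ
  have hρ : ρ ∈ P := sndMemEnum hp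
  have h1 : ρ.Perm (List.range' 1 m) := hP ρ hρ
  have h2 : (ρ.map (· + m)).Perm (List.range' (1+m) m) := by
    have := h1.map (· + m)
    rwa [show (List.range' 1 m).map (· + m) = List.range' (1+m) m by
      rw [show ((· + m) : ℕ → ℕ) = (m + ·) from funext fun x => by omega,
        List.map_add_range']
      congr 1
      omega] at this
  have h3 : (ρ ++ ρ.map (· + m)).Perm (List.range' 1 (m+m)) := by
    have := h1.append h2
    rwa [show List.range' 1 m ++ List.range' (1+m) m = List.range' 1 (m+m) by
      have := List.range'_append (s := 1) (m := m) (n := m) (step := 1)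
      simpa using this] at this
  simp only []
  by_cases hk : k % 2 = 0
  · rwa [if_pos hk]
  · rw [if_neg hk]
    exact List.perm_append_comm.trans h3

end Aux

set_option maxRecDepth 1000000

/-- Theorem 2: for every `n`, the voting profile `R_n` has `4n+10` rows and generates the
tournament `η_n` on `{1,…,2^(n+3)}`; the profile `R̃_n` obtained by deleting the last
row of `R_n` has `4n+9` rows and also generates `η_n`. -/
theorem stmt6 (n : ℕ) :
    (Rprofile n).length = 4*n + 10 ∧
    Generates (Rprofile n) (2^(n+3)) (eta n) ∧
    (Rprofile n).dropLast.length = 4*n + 9 ∧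
    Generates (Rprofile n).dropLast (2^(n+3)) (eta n) := by
  induction n with
  | zero =>
    exact ⟨by decide, ⟨by decide, by decide⟩, by decide, by decide, by decide⟩
  | succ n ih =>
    obtain ⟨hlen, ⟨hrows, hgen⟩, hlenD, hrowsD, hgenD⟩ := ih
    set m : ℕ := 2^(n+3) with hm
    have hpow : 2^(n+4) = m + m := by rw [hm]; ring
    set P : List (List ℕ) := Rprofile n with hP
    set B : List (List ℕ) := bowtie P (P.map (List.map (· + m))) with hB
    have hReq : Rprofile (n+1) = v1 (n+1) :: v2 (n+1) :: v3 (n+1) :: v4 (n+1) :: B := rfl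
    have hQlen : (P.map (List.map (· + m))).length = P.length := by simp
    have hBlen : B.length = P.length := length_bowtie hQlen.symm
    have hBne : B ≠ [] := by
      intro hc
      rw [hc] at hBlen
      simp at hBlen
      omega
    -- dropLast structure
    have hPD : P.dropLast.length = 4*n + 9 := hlenD
    have hBD : B.dropLast = bowtie P.dropLast (P.dropLast.map (List.map (· + m))) := by
      rw [hB, bowtie_dropLast hQlen.symm, dropLast_map']
    have hRD : (Rprofile (n+1)).dropLast
        = v1 (n+1) :: v2 (n+1) :: v3 (n+1) :: v4 (n+1) :: B.dropLast := by
      rw [hReq]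
      rw [List.dropLast_cons_of_ne_nil (by simp),
        List.dropLast_cons_of_ne_nil (by simp),
        List.dropLast_cons_of_ne_nil (by simp),
        List.dropLast_cons_of_ne_nil hBne]
    -- lengths
    have hlen' : (Rprofile (n+1)).length = 4*(n+1) + 10 := by
      rw [hReq]
      simp only [List.length_cons, hBlen, hlen]
      omega
    have hlenD' : (Rprofile (n+1)).dropLast.length = 4*(n+1) + 9 := by
      rw [List.length_dropLast, hlen']
      omega
    -- rows
    have hBrows : ∀ σ ∈ B, σ.Perm (List.range' 1 (2^(n+4))) := by
      rw [hpow]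
      exact bowtie_rows hrows
    have hBDrows : ∀ σ ∈ B.dropLast, σ.Perm (List.range' 1 (2^(n+4))) := by
      rw [hBD, hpow]
      exact bowtie_rows hrowsD
    have hrows' : ∀ ρ ∈ Rprofile (n+1), ρ.Perm (List.range' 1 (2^(n+4))) := by
      rw [hReq]
      intro ρ hρ
      simp only [List.mem_cons] at hρ
      rcases hρ with rfl | rfl | rfl | rfl | h
      · exact v1_perm (n+1)
      · exact v2_perm (n+1)
      · exact v3_perm (n+1)
      · exact v4_perm (n+1)
      · exact hBrows ρ h
    have hrowsD' : ∀ ρ ∈ (Rprofile (n+1)).dropLast, ρ.Perm (List.range' 1 (2^(n+4))) := by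
      rw [hRD]
      intro ρ hρ
      simp only [List.mem_cons] at hρ
      rcases hρ with rfl | rfl | rfl | rfl | h
      · exact v1_perm (n+1)
      · exact v2_perm (n+1)
      · exact v3_perm (n+1)
      · exact v4_perm (n+1)
      · exact hBDrows ρ h
    -- the key iff, proven uniformly for both the full profile and the dropLast one
    have main : ∀ (S : List (List ℕ)) (L : ℕ),
        (∀ ρ ∈ S, ρ.Perm (List.range' 1 m)) →
        S.length = L →
        (∀ i ∈ List.range' 1 m, ∀ j ∈ List.range' 1 m, i ≠ j →
          (eta n i j = true ↔ prefCount S j i < prefCount S i j)) →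
        4 ≤ L →
        ∀ i ∈ List.range' 1 (2^(n+4)), ∀ j ∈ List.range' 1 (2^(n+4)), i ≠ j →
          (eta (n+1) i j = true ↔
            prefCount (v1 (n+1) :: v2 (n+1) :: v3 (n+1) :: v4 (n+1)
              :: bowtie S (S.map (List.map (· + m)))) j i <
            prefCount (v1 (n+1) :: v2 (n+1) :: v3 (n+1) :: v4 (n+1)
              :: bowtie S (S.map (List.map (· + m)))) i j) := by
      intro S L hSrows hSlen hSgen hL4 i hi j hj hij
      rw [List.mem_range'_1] at hi hj
      have hi1 : 1 ≤ i := hi.1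
      have hi2 : i ≤ 2^(n+4) := by omega
      have hj1 : 1 ≤ j := hj.1
      have hj2 : j ≤ 2^(n+4) := by omega
      have hi2' : i ≤ 2^((n+1)+3) := hi2
      have hj2' : j ≤ 2^((n+1)+3) := hj2
      set T : List (List ℕ) := bowtie S (S.map (List.map (· + m))) with hT
      have hsplit : ∀ a b : ℕ,
          prefCount (v1 (n+1) :: v2 (n+1) :: v3 (n+1) :: v4 (n+1) :: T) a b
            = prefCount [v1 (n+1), v2 (n+1), v3 (n+1), v4 (n+1)] a b
              + prefCount T a b := by
        intro a b
        rw [show (v1 (n+1) :: v2 (n+1) :: v3 (n+1) :: v4 (n+1) :: T)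
          = [v1 (n+1), v2 (n+1), v3 (n+1), v4 (n+1)] ++ T from rfl, prefCount_append]
      have hc4ij := count4_eq (n+1) hi1 hi2' hj1 hj2' hij
      have hc4ji := count4_eq (n+1) hj1 hj2' hi1 hi2' (Ne.symm hij)
      have hmeq : (2:ℕ)^((n+1)+2) = m := rfl
      rw [hmeq] at hc4ij hc4ji
      by_cases hsi : i ≤ m <;> by_cases hsj : j ≤ m
      · -- both small
        have heta : eta (n+1) i j = eta n i j := by
          simp only [eta]
          rw [if_pos (show i ≤ 2^(n+3) ∧ j ≤ 2^(n+3) from ⟨hsi, hsj⟩)]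
        rw [if_pos ⟨hsi, hsj⟩] at hc4ij
        rw [if_pos ⟨hsj, hsi⟩] at hc4ji
        have hbij : prefCount T i j = prefCount S i j :=
          bowtie_small hSrows hi1 hsi hj1 hsj
        have hbji : prefCount T j i = prefCount S j i :=
          bowtie_small hSrows hj1 hsj hi1 hsi
        rw [heta, hsplit, hsplit, hc4ij, hc4ji, hbij, hbji,
          hSgen i (List.mem_range'_1.2 ⟨hi1, by omega⟩)
            j (List.mem_range'_1.2 ⟨hj1, by omega⟩) hij]
        omega
      · -- i small, j large
        have heta : eta (n+1) i j = decide ((i + j) % 2 = 0) := by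
          simp only [eta]
          rw [if_neg (by omega), if_neg (by omega), if_pos hsi]
        rw [if_neg (by omega), if_neg (by omega), if_pos hsi] at hc4ij
        rw [if_neg (by omega), if_neg (by omega), if_neg (by omega)] at hc4ji
        have hbij : prefCount T i j = (S.length + 1)/2 :=
          bowtie_mixed₁ hSrows hi1 hsi (by omega) (by omega)
        have hbji : prefCount T j i = S.length/2 :=
          bowtie_mixed₂ hSrows hi1 hsi (by omega) (by omega)
        have hji : j + i = i + j := by omega
        rw [hji] at hc4ji
        rw [heta, hsplit, hsplit, hc4ij, hc4ji, hbij, hbji, hSlen,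
          decide_eq_true_iff]
        rcases Nat.mod_two_eq_zero_or_one (i+j) with hpar | hpar <;>
          simp [hpar] <;> omega
      · -- i large, j small
        have heta : eta (n+1) i j = decide ((i + j) % 2 = 1) := by
          simp only [eta]
          rw [if_neg (by omega), if_neg (by omega), if_neg hsi]
        rw [if_neg (by omega), if_neg (by omega), if_neg hsi] at hc4ij
        rw [if_neg (by omega), if_neg (by omega), if_pos hsj] at hc4ji
        have hbij : prefCount T i j = S.length/2 :=
          bowtie_mixed₂ hSrows hj1 hsj (by omega) (by omega)
        have hbji : prefCount T j i = (S.length + 1)/2 :=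
          bowtie_mixed₁ hSrows hj1 hsj (by omega) (by omega)
        have hji : j + i = i + j := by omega
        rw [hji] at hc4ji
        rw [heta, hsplit, hsplit, hc4ij, hc4ji, hbij, hbji, hSlen,
          decide_eq_true_iff]
        rcases Nat.mod_two_eq_zero_or_one (i+j) with hpar | hpar <;>
          simp [hpar] <;> omega
      · -- both large
        have heta : eta (n+1) i j = eta n (i - 2^(n+3)) (j - 2^(n+3)) := by
          simp only [eta]
          rw [if_neg (by omega), if_pos (by constructor <;> omega)]
        rw [if_neg (by omega), if_pos ⟨by omega, by omega⟩] at hc4ij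
        rw [if_neg (by omega), if_pos ⟨by omega, by omega⟩] at hc4ji
        have hbij : prefCount T i j = prefCount S (i-m) (j-m) :=
          bowtie_large hSrows (by omega) (by omega) (by omega) (by omega)
        have hbji : prefCount T j i = prefCount S (j-m) (i-m) :=
          bowtie_large hSrows (by omega) (by omega) (by omega) (by omega)
        rw [heta, hsplit, hsplit, hc4ij, hc4ji, hbij, hbji,
          hSgen (i-m) (List.mem_range'_1.2 ⟨by omega, by omega⟩)
            (j-m) (List.mem_range'_1.2 ⟨by omega, by omega⟩) (by omega)]
        omega
    refine ⟨hlen', ⟨hrows', ?_⟩, hlenD', ⟨hrowsD', ?_⟩⟩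
    · rw [hReq]
      exact main P (4*n+10) hrows hlen hgen (by omega)
    · rw [hRD, hBD]
      exact main P.dropLast (4*n+9) hrowsD hlenD hgenD (by omega)
end

section
/- For every n ≥ 3 there exists a voting profile with exactly 4n − 3 voters on the candidate set [2^n] such that, for every candidate i ∈ [2^n], there is a bracket π for which i is the winner of the single-elimination knockout tournament in which each pairwise challenge is decided by the majority of the voters' preference lists. -/
namespace KO
open List

lemma mem_range'' {s k a : ℕ} : a ∈ List.range' s k ↔ s ≤ a ∧ a < s + k := by
  rw [List.mem_range']
  constructor
  · rintro ⟨i, hi, rfl⟩; omega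
  · intro h; exact ⟨a - s, by omega, by omega⟩

lemma indexOf_range' : ∀ (k s a : ℕ), s ≤ a → a < s + k → (List.range' s k).idxOf a = a - s
  | 0, s, a, h1, h2 => by omega
  | k+1, s, a, h1, h2 => by
      rw [List.range'_succ]
      rcases eq_or_ne s a with rfl | hne
      · simp [List.idxOf_cons_self]
      · rw [List.idxOf_cons_ne _ hne, indexOf_range' k (s+1) a (by omega) (by omega)]
        omega

lemma indexOf_map_add (M : ℕ) : ∀ (l : List ℕ) (a : ℕ),
    (l.map (· + M)).idxOf (a + M) = l.idxOf a
  | [], a => rfl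
  | x :: l, a => by
      rcases eq_or_ne x a with rfl | hne
      · simp [List.idxOf_cons_self]
      · rw [List.map_cons, List.idxOf_cons_ne _ (by omega), List.idxOf_cons_ne _ hne,
          indexOf_map_add M l a]

/-- roundStep lemmas -/
lemma roundStep_nil (f) : roundStep f [] = [] := rfl
lemma roundStep_single (f a) : roundStep f [a] = [a] := rfl
lemma roundStep_cons (f a b rest) :
    roundStep f (a :: b :: rest) = (if f a b then a else b) :: roundStep f rest := rfl

lemma roundStep_subset (f) : ∀ l, roundStep f l ⊆ l
  | [] => by simp [roundStep_nil]
  | [a] => by simp [roundStep_single]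
  | a :: b :: rest => by
      rw [roundStep_cons]
      intro x hx
      rcases List.mem_cons.1 hx with h | h
      · subst h; split <;> simp
      · have := roundStep_subset f rest h
        simp [this]

lemma roundStep_congr {f g : ℕ → ℕ → Bool} : ∀ {l : List ℕ},
    (∀ x ∈ l, ∀ y ∈ l, f x y = g x y) → roundStep f l = roundStep g l
  | [], _ => rfl
  | [a], _ => rfl
  | a :: b :: rest, h => by
      rw [roundStep_cons, roundStep_cons,
        roundStep_congr (fun x hx y hy => h x (by simp [hx]) y (by simp [hy])),
        h a (by simp) b (by simp)]

lemma roundStep_map {f g : ℕ → ℕ → Bool} {h : ℕ → ℕ} : ∀ {l : List ℕ},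
    (∀ x ∈ l, ∀ y ∈ l, f (h x) (h y) = g x y) →
    roundStep f (l.map h) = (roundStep g l).map h
  | [], _ => rfl
  | [a], _ => rfl
  | a :: b :: rest, hc => by
      rw [List.map_cons, List.map_cons, roundStep_cons, roundStep_cons, List.map_cons,
        roundStep_map (fun x hx y hy => hc x (by simp [hx]) y (by simp [hy])),
        hc a (by simp) b (by simp)]
      split <;> rfl

lemma roundStep_append (f) : ∀ (k : ℕ) (l₁ l₂ : List ℕ), l₁.length = 2*k →
    roundStep f (l₁ ++ l₂) = roundStep f l₁ ++ roundStep f l₂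
  | 0, l₁, l₂, h => by
      have : l₁ = [] := List.eq_nil_of_length_eq_zero (by omega)
      subst this; simp [roundStep_nil]
  | k+1, l₁, l₂, h => by
      match l₁, h with
      | a :: b :: rest, h =>
        simp only [List.cons_append, roundStep_cons]
        rw [roundStep_append f k rest l₂ (by simp at h; omega)]

lemma roundStep_length (f) : ∀ (k : ℕ) (l : List ℕ), l.length = 2*k →
    (roundStep f l).length = k
  | 0, l, h => by
      have : l = [] := List.eq_nil_of_length_eq_zero (by omega)
      subst this; simp [roundStep_nil]
  | k+1, l, h => by
      match l, h with
      | a :: b :: rest, h =>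
        rw [roundStep_cons, List.length_cons,
          roundStep_length f k rest (by simp at h; omega)]

/-- iterate lemmas -/
lemma iter_subset (f : ℕ → ℕ → Bool) : ∀ (n : ℕ) (l : List ℕ), (roundStep f)^[n] l ⊆ l
  | 0, l => by simp
  | n+1, l => by
      rw [Function.iterate_succ_apply]
      exact List.Subset.trans (iter_subset f n (roundStep f l)) (roundStep_subset f l)

lemma iter_congr {f g : ℕ → ℕ → Bool} : ∀ (n : ℕ) (l : List ℕ),
    (∀ x ∈ l, ∀ y ∈ l, f x y = g x y) → (roundStep f)^[n] l = (roundStep g)^[n] l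
  | 0, l, _ => rfl
  | n+1, l, h => by
      rw [Function.iterate_succ_apply, Function.iterate_succ_apply, roundStep_congr h]
      exact iter_congr n _ (fun x hx y hy =>
        h x (roundStep_subset g l hx) y (roundStep_subset g l hy))

lemma iter_map {f g : ℕ → ℕ → Bool} {h : ℕ → ℕ} : ∀ (n : ℕ) (l : List ℕ),
    (∀ x ∈ l, ∀ y ∈ l, f (h x) (h y) = g x y) →
    (roundStep f)^[n] (l.map h) = ((roundStep g)^[n] l).map h
  | 0, l, _ => rfl
  | n+1, l, hc => by
      rw [Function.iterate_succ_apply, Function.iterate_succ_apply, roundStep_map hc]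
      exact iter_map n _ (fun x hx y hy =>
        hc x (roundStep_subset g l hx) y (roundStep_subset g l hy))

lemma iter_append (f : ℕ → ℕ → Bool) : ∀ (n : ℕ) (l₁ l₂ : List ℕ),
    l₁.length = 2^n → l₂.length = 2^n →
    (roundStep f)^[n] (l₁ ++ l₂) = (roundStep f)^[n] l₁ ++ (roundStep f)^[n] l₂
  | 0, l₁, l₂, _, _ => rfl
  | n+1, l₁, l₂, h1, h2 => by
      have e1 : l₁.length = 2 * 2^n := by rw [h1]; ring
      have e2 : l₂.length = 2 * 2^n := by rw [h2]; ring
      rw [Function.iterate_succ_apply, Function.iterate_succ_apply,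
        Function.iterate_succ_apply, roundStep_append f (2^n) l₁ l₂ e1]
      exact iter_append f n _ _ (roundStep_length f _ _ e1) (roundStep_length f _ _ e2)

lemma iter_length (f : ℕ → ℕ → Bool) : ∀ (n : ℕ) (l : List ℕ), l.length = 2^n →
    ((roundStep f)^[n] l).length = 1
  | 0, l, h => by simpa using h
  | n+1, l, h => by
      rw [Function.iterate_succ_apply]
      exact iter_length f n _ (roundStep_length f _ _ (by rw [h]; ring))

lemma iter_winner {f : ℕ → ℕ → Bool} {n : ℕ} {l : List ℕ} {w : ℕ}
    (hl : l.length = 2^n) (hw : ((roundStep f)^[n] l).headI = w) :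
    (roundStep f)^[n] l = [w] := by
  have h1 := iter_length f n l hl
  match hm : (roundStep f)^[n] l, h1 with
  | [x], _ =>
    rw [hm] at hw
    simpa using hw

/-- prefCount lemmas -/
lemma prefCount_nil (i j : ℕ) : prefCount [] i j = 0 := rfl

lemma prefCount_cons (r : List ℕ) (R : List (List ℕ)) (i j : ℕ) :
    prefCount (r :: R) i j
      = (if r.idxOf i < r.idxOf j then 1 else 0) + prefCount R i j := by
  simp only [prefCount, List.filter_cons]
  split
  · rename_i hd
    rw [if_pos (by simpa using hd)]
    simp [Nat.add_comm]
  · rename_i hd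
    rw [if_neg (by simpa using hd)]
    simp

lemma prefCount_append (R₁ R₂ : List (List ℕ)) (i j : ℕ) :
    prefCount (R₁ ++ R₂) i j = prefCount R₁ i j + prefCount R₂ i j := by
  simp [prefCount, List.filter_append]

lemma prefCount_map_iff {R : List (List ℕ)} {E : List ℕ → List ℕ} {i j i' j' : ℕ}
    (h : ∀ ρ ∈ R, ((E ρ).idxOf i < (E ρ).idxOf j ↔ ρ.idxOf i' < ρ.idxOf j')) :
    prefCount (R.map E) i j = prefCount R i' j' := by
  simp only [prefCount, List.filter_map, List.length_map]
  congr 1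
  exact List.filter_congr (fun ρ hρ => by
    simp only [Function.comp_apply, decide_eq_decide]; exact h ρ hρ)

lemma prefCount_map_true {R : List (List ℕ)} {E : List ℕ → List ℕ} {i j : ℕ}
    (h : ∀ ρ ∈ R, (E ρ).idxOf i < (E ρ).idxOf j) :
    prefCount (R.map E) i j = R.length := by
  simp only [prefCount, List.filter_map, List.length_map]
  rw [List.filter_congr (q := fun _ => true) (fun ρ hρ => by simpa using h ρ hρ)]
  simp

lemma prefCount_map_false {R : List (List ℕ)} {E : List ℕ → List ℕ} {i j : ℕ}
    (h : ∀ ρ ∈ R, ¬ (E ρ).idxOf i < (E ρ).idxOf j) :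
    prefCount (R.map E) i j = 0 := by
  simp only [prefCount, List.filter_map, List.length_map]
  rw [List.filter_congr (q := fun _ => false) (fun ρ hρ => by simpa using h ρ hρ)]
  simp


/-- descending list [k, k-1, ..., 1] -/
def desc : ℕ → List ℕ
  | 0 => []
  | k+1 => (k+1) :: desc k

lemma desc_perm : ∀ k : ℕ, (desc k).Perm (List.range' 1 k)
  | 0 => by simp [desc]
  | k+1 => by
      have : List.range' 1 (k+1) = List.range' 1 k ++ [1 + k] := by
        simpa using List.range'_concat (step := 1) (s := 1) (n := k)
      rw [this, desc]
      refine List.Perm.trans ?_ (List.perm_append_singleton _ _).symm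
      have : 1 + k = k + 1 := by omega
      rw [this]
      exact (desc_perm k).cons _

lemma indexOf_desc : ∀ (k a : ℕ), 1 ≤ a → a ≤ k → (desc k).idxOf a = k - a
  | 0, a, h1, h2 => by omega
  | k+1, a, h1, h2 => by
      rcases eq_or_ne (k+1) a with rfl | hne
      · simp [desc, List.idxOf_cons_self]
      · rw [desc, List.idxOf_cons_ne _ hne, indexOf_desc k a h1 (by omega)]
        omega

/-- ascending interleave: itl M s k = [s, s+M, s+1, s+1+M, ...] (k blocks) -/
def itl (M : ℕ) : ℕ → ℕ → List ℕ
  | _, 0 => []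
  | s, k+1 => s :: (s + M) :: itl M (s+1) k

lemma itl_perm (M : ℕ) : ∀ (k s : ℕ),
    (itl M s k).Perm (List.range' s k ++ (List.range' s k).map (· + M))
  | 0, s => by simp [itl]
  | k+1, s => by
      rw [itl, List.range'_succ, List.map_cons, List.cons_append]
      refine List.Perm.cons _ ?_
      refine List.Perm.trans ((itl_perm M k (s+1)).cons _) ?_
      exact List.Perm.symm List.perm_middle

lemma indexOf_itl_lo (M : ℕ) : ∀ (k s a : ℕ), 1 ≤ s → s + k ≤ M + 1 →
    s ≤ a → a < s + k → (itl M s k).idxOf a = 2 * (a - s)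
  | 0, s, a, _, _, h3, h4 => by omega
  | k+1, s, a, h1, h2, h3, h4 => by
      rcases eq_or_ne s a with rfl | hne
      · simp [itl, List.idxOf_cons_self]
      · rw [itl, List.idxOf_cons_ne _ hne, List.idxOf_cons_ne _ (by omega),
          indexOf_itl_lo M k (s+1) a (by omega) (by omega) (by omega) (by omega)]
        omega

lemma indexOf_itl_hi (M : ℕ) : ∀ (k s a : ℕ), 1 ≤ s → s + k ≤ M + 1 →
    s ≤ a → a < s + k → (itl M s k).idxOf (a + M) = 2 * (a - s) + 1
  | 0, s, a, _, _, h3, h4 => by omega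
  | k+1, s, a, h1, h2, h3, h4 => by
      rcases eq_or_ne s a with rfl | hne
      · rw [itl, List.idxOf_cons_ne _ (by omega), List.idxOf_cons_self]
        omega
      · rw [itl, List.idxOf_cons_ne _ (by omega), List.idxOf_cons_ne _ (by omega),
          indexOf_itl_hi M k (s+1) a (by omega) (by omega) (by omega) (by omega)]
        omega

/-- descending interleave: dtl M k = [k, k+M, k-1, k-1+M, ...] -/
def dtl (M : ℕ) : ℕ → List ℕ
  | 0 => []
  | k+1 => (k+1) :: (k+1+M) :: dtl M k

lemma dtl_perm (M : ℕ) : ∀ k : ℕ,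
    (dtl M k).Perm (List.range' 1 k ++ (List.range' 1 k).map (· + M))
  | 0 => by simp [dtl]
  | k+1 => by
      have h1 : List.range' 1 (k+1) = List.range' 1 k ++ [k + 1] := by
        have := List.range'_concat (step := 1) (s := 1) (n := k)
        simpa [Nat.add_comm] using this
      rw [dtl, h1]
      have hmap : (List.range' 1 k ++ [k + 1]).map (· + M)
          = (List.range' 1 k).map (· + M) ++ [k + 1 + M] := by simp
      rw [hmap]
      have step1 : (k+1) :: (k+1+M) :: dtl M k
          ~ (k+1) :: (k+1+M) :: (List.range' 1 k ++ (List.range' 1 k).map (· + M)) :=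
        ((dtl_perm M k).cons _).cons _
      refine step1.trans ?_
      refine List.Perm.trans (List.Perm.cons _ List.perm_middle.symm) ?_
      refine List.Perm.trans List.perm_middle.symm ?_
      have : (List.range' 1 k ++ [k + 1]) ++ ((List.range' 1 k).map (· + M) ++ [k + 1 + M])
          = List.range' 1 k ++ ((k+1) :: ((List.range' 1 k).map (· + M) ++ [k + 1 + M])) := by
        simp
      rw [this]
      refine List.Perm.append_left _ ?_
      refine List.Perm.cons _ ?_
      exact (List.perm_append_singleton _ _).symm

lemma indexOf_dtl_lo (M : ℕ) : ∀ (k a : ℕ), k ≤ M → 1 ≤ a → a ≤ k →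
    (dtl M k).idxOf a = 2 * (k - a)
  | 0, a, _, h1, h2 => by omega
  | k+1, a, hM, h1, h2 => by
      rcases eq_or_ne (k+1) a with rfl | hne
      · simp [dtl, List.idxOf_cons_self]
      · rw [dtl, List.idxOf_cons_ne _ hne, List.idxOf_cons_ne _ (by omega),
          indexOf_dtl_lo M k a (by omega) h1 (by omega)]
        omega

lemma indexOf_dtl_hi (M : ℕ) : ∀ (k a : ℕ), k ≤ M → 1 ≤ a → a ≤ k →
    (dtl M k).idxOf (a + M) = 2 * (k - a) + 1
  | 0, a, _, h1, h2 => by omega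
  | k+1, a, hM, h1, h2 => by
      rcases eq_or_ne (k+1) a with rfl | hne
      · rw [dtl, List.idxOf_cons_ne _ (by omega), List.idxOf_cons_self]
        omega
      · rw [dtl, List.idxOf_cons_ne _ (by omega), List.idxOf_cons_ne _ (by omega),
          indexOf_dtl_hi M k a (by omega) h1 (by omega)]
        omega


/-- extension of a voter and the new profile -/
def ext1 (M : ℕ) (ρ : List ℕ) : List ℕ := ρ ++ ρ.map (· + M)
def ext2 (M : ℕ) (ρ : List ℕ) : List ℕ := ρ.map (· + M) ++ ρ
def vA (M : ℕ) : List ℕ := (List.range' 1 M).map (· + M) ++ List.range' 1 M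
def vB (M : ℕ) : List ℕ := (desc M).map (· + M) ++ desc M
def nextR (M t : ℕ) (R : List (List ℕ)) : List (List ℕ) :=
  (R.take t).map (ext1 M) ++ ((R.drop t).map (ext2 M) ++ [vA M, vB M, itl M 1 M, dtl M M])

lemma idx_vA_lo {M a : ℕ} (h1 : 1 ≤ a) (h2 : a ≤ M) : (vA M).idxOf a = M + (a - 1) := by
  rw [vA, List.idxOf_append_of_notMem, List.length_map, List.length_range',
    indexOf_range' M 1 a h1 (by omega)]
  intro h
  obtain ⟨x, hx, hxe⟩ := List.mem_map.1 h
  have := mem_range''.1 hx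
  omega

lemma idx_vA_hi {M a : ℕ} (h1 : 1 ≤ a) (h2 : a ≤ M) : (vA M).idxOf (a + M) = a - 1 := by
  rw [vA, List.idxOf_append_of_mem, indexOf_map_add, indexOf_range' M 1 a h1 (by omega)]
  exact List.mem_map.2 ⟨a, mem_range''.2 ⟨h1, by omega⟩, rfl⟩

lemma idx_vB_lo {M a : ℕ} (h1 : 1 ≤ a) (h2 : a ≤ M) : (vB M).idxOf a = M + (M - a) := by
  rw [vB, List.idxOf_append_of_notMem, List.length_map,
    (desc_perm M).length_eq, List.length_range', indexOf_desc M a h1 h2]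
  intro h
  obtain ⟨x, hx, hxe⟩ := List.mem_map.1 h
  have := mem_range''.1 ((desc_perm M).mem_iff.1 hx)
  omega

lemma idx_vB_hi {M a : ℕ} (h1 : 1 ≤ a) (h2 : a ≤ M) : (vB M).idxOf (a + M) = M - a := by
  rw [vB, List.idxOf_append_of_mem, indexOf_map_add, indexOf_desc M a h1 h2]
  exact List.mem_map.2 ⟨a, (desc_perm M).mem_iff.2 (mem_range''.2 ⟨h1, by omega⟩), rfl⟩

lemma idx_itl_lo' {M a : ℕ} (h1 : 1 ≤ a) (h2 : a ≤ M) : (itl M 1 M).idxOf a = 2 * (a - 1) :=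
  indexOf_itl_lo M M 1 a le_rfl (by omega) h1 (by omega)

lemma idx_itl_hi' {M a : ℕ} (h1 : 1 ≤ a) (h2 : a ≤ M) :
    (itl M 1 M).idxOf (a + M) = 2 * (a - 1) + 1 :=
  indexOf_itl_hi M M 1 a le_rfl (by omega) h1 (by omega)

lemma idx_dtl_lo' {M a : ℕ} (h1 : 1 ≤ a) (h2 : a ≤ M) : (dtl M M).idxOf a = 2 * (M - a) :=
  indexOf_dtl_lo M M a le_rfl h1 h2

lemma idx_dtl_hi' {M a : ℕ} (h1 : 1 ≤ a) (h2 : a ≤ M) :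
    (dtl M M).idxOf (a + M) = 2 * (M - a) + 1 :=
  indexOf_dtl_hi M M a le_rfl h1 h2

lemma row_idx {M : ℕ} {ρ : List ℕ} (hρ : ρ.Perm (List.range' 1 M)) {a : ℕ}
    (h1 : 1 ≤ a) (h2 : a ≤ M) :
    (ext1 M ρ).idxOf a = ρ.idxOf a ∧ (ext1 M ρ).idxOf (a + M) = M + ρ.idxOf a ∧
    (ext2 M ρ).idxOf a = M + ρ.idxOf a ∧ (ext2 M ρ).idxOf (a + M) = ρ.idxOf a ∧
    ρ.idxOf a < M := by
  have hlenρ : ρ.length = M := by rw [hρ.length_eq, List.length_range']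
  have hmem : a ∈ ρ := hρ.mem_iff.2 (mem_range''.2 ⟨h1, by omega⟩)
  have hbd : ∀ x ∈ ρ, 1 ≤ x ∧ x ≤ M := fun x hx => by
    have := mem_range''.1 (hρ.mem_iff.1 hx); omega
  have hnotB : a + M ∉ ρ := fun h => by have := hbd _ h; omega
  have hAnm : a ∉ ρ.map (· + M) := fun h => by
    obtain ⟨x, hx, hxe⟩ := List.mem_map.1 h
    have := hbd _ hx; omega
  have hBm : a + M ∈ ρ.map (· + M) := List.mem_map.2 ⟨a, hmem, rfl⟩
  refine ⟨List.idxOf_append_of_mem hmem, ?_, ?_, ?_, ?_⟩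
  · rw [ext1, List.idxOf_append_of_notMem hnotB, indexOf_map_add, hlenρ]
  · rw [ext2, List.idxOf_append_of_notMem hAnm, List.length_map, hlenρ]
  · rw [ext2, List.idxOf_append_of_mem hBm, indexOf_map_add]
  · rw [← hlenρ]; exact List.idxOf_lt_length_iff.2 hmem

section claims
variable {M t : ℕ} {R : List (List ℕ)} (hperm : ∀ ρ ∈ R, ρ.Perm (List.range' 1 M))

lemma pc_split (i j : ℕ) : prefCount R i j = prefCount (R.take t) i j + prefCount (R.drop t) i j := by
  conv_lhs => rw [← List.take_append_drop t R]
  rw [prefCount_append]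

include hperm in
lemma pcA {a a' : ℕ} (h1 : 1 ≤ a) (h2 : a ≤ M) (h3 : 1 ≤ a') (h4 : a' ≤ M) (hne : a ≠ a') :
    prefCount (nextR M t R) a a' = prefCount R a a' + 2 := by
  rw [nextR, prefCount_append, prefCount_append]
  have hx : prefCount ((R.take t).map (ext1 M)) a a' = prefCount (R.take t) a a' :=
    prefCount_map_iff (fun ρ hρ => by
      have hρR := hperm ρ (List.take_subset t R hρ)
      rw [(row_idx hρR h1 h2).1, (row_idx hρR h3 h4).1])
  have hy : prefCount ((R.drop t).map (ext2 M)) a a' = prefCount (R.drop t) a a' :=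
    prefCount_map_iff (fun ρ hρ => by
      have hρR := hperm ρ (List.drop_subset t R hρ)
      rw [(row_idx hρR h1 h2).2.2.1, (row_idx hρR h3 h4).2.2.1]
      omega)
  have hz : prefCount [vA M, vB M, itl M 1 M, dtl M M] a a' = 2 := by
    rw [prefCount_cons, prefCount_cons, prefCount_cons, prefCount_cons, prefCount_nil,
      idx_vA_lo h1 h2, idx_vA_lo h3 h4, idx_vB_lo h1 h2, idx_vB_lo h3 h4,
      idx_itl_lo' h1 h2, idx_itl_lo' h3 h4, idx_dtl_lo' h1 h2, idx_dtl_lo' h3 h4]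
    rcases Nat.lt_or_ge a a' with h | h
    · rw [if_pos (by omega), if_neg (by omega), if_pos (by omega), if_neg (by omega)]
    · rw [if_neg (by omega), if_pos (by omega), if_neg (by omega), if_pos (by omega)]
  have hs := pc_split (t := t) (R := R) a a'
  rw [hx, hy, hz]
  omega

include hperm in
lemma pcB {a a' : ℕ} (h1 : 1 ≤ a) (h2 : a ≤ M) (h3 : 1 ≤ a') (h4 : a' ≤ M) (hne : a ≠ a') :
    prefCount (nextR M t R) (a + M) (a' + M) = prefCount R a a' + 2 := by
  rw [nextR, prefCount_append, prefCount_append]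
  have hx : prefCount ((R.take t).map (ext1 M)) (a + M) (a' + M) = prefCount (R.take t) a a' :=
    prefCount_map_iff (fun ρ hρ => by
      have hρR := hperm ρ (List.take_subset t R hρ)
      rw [(row_idx hρR h1 h2).2.1, (row_idx hρR h3 h4).2.1]
      omega)
  have hy : prefCount ((R.drop t).map (ext2 M)) (a + M) (a' + M) = prefCount (R.drop t) a a' :=
    prefCount_map_iff (fun ρ hρ => by
      have hρR := hperm ρ (List.drop_subset t R hρ)
      rw [(row_idx hρR h1 h2).2.2.2.1, (row_idx hρR h3 h4).2.2.2.1])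
  have hz : prefCount [vA M, vB M, itl M 1 M, dtl M M] (a + M) (a' + M) = 2 := by
    rw [prefCount_cons, prefCount_cons, prefCount_cons, prefCount_cons, prefCount_nil,
      idx_vA_hi h1 h2, idx_vA_hi h3 h4, idx_vB_hi h1 h2, idx_vB_hi h3 h4,
      idx_itl_hi' h1 h2, idx_itl_hi' h3 h4, idx_dtl_hi' h1 h2, idx_dtl_hi' h3 h4]
    rcases Nat.lt_or_ge a a' with h | h
    · rw [if_pos (by omega), if_neg (by omega), if_pos (by omega), if_neg (by omega)]
    · rw [if_neg (by omega), if_pos (by omega), if_neg (by omega), if_pos (by omega)]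
  have hs := pc_split (t := t) (R := R) a a'
  rw [hx, hy, hz]
  omega

include hperm in
lemma pcPart1 (ht : t ≤ R.length) {a : ℕ} (h1 : 1 ≤ a) (h2 : a ≤ M) :
    prefCount (nextR M t R) a (a + M) = t + 2 := by
  rw [nextR, prefCount_append, prefCount_append]
  have hx : prefCount ((R.take t).map (ext1 M)) a (a + M) = (R.take t).length :=
    prefCount_map_true (fun ρ hρ => by
      have hρR := hperm ρ (List.take_subset t R hρ)
      rw [(row_idx hρR h1 h2).1, (row_idx hρR h1 h2).2.1]
      omega)
  have hy : prefCount ((R.drop t).map (ext2 M)) a (a + M) = 0 :=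
    prefCount_map_false (fun ρ hρ => by
      have hρR := hperm ρ (List.drop_subset t R hρ)
      rw [(row_idx hρR h1 h2).2.2.1, (row_idx hρR h1 h2).2.2.2.1]
      omega)
  have hz : prefCount [vA M, vB M, itl M 1 M, dtl M M] a (a + M) = 2 := by
    rw [prefCount_cons, prefCount_cons, prefCount_cons, prefCount_cons, prefCount_nil,
      idx_vA_lo h1 h2, idx_vA_hi h1 h2, idx_vB_lo h1 h2, idx_vB_hi h1 h2,
      idx_itl_lo' h1 h2, idx_itl_hi' h1 h2, idx_dtl_lo' h1 h2, idx_dtl_hi' h1 h2]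
    rw [if_neg (by omega), if_neg (by omega), if_pos (by omega), if_pos (by omega)]
  rw [hx, hy, hz, List.length_take]
  omega

include hperm in
lemma pcPart2 (ht : t ≤ R.length) {a : ℕ} (h1 : 1 ≤ a) (h2 : a ≤ M) :
    prefCount (nextR M t R) (a + M) a = (R.length - t) + 2 := by
  rw [nextR, prefCount_append, prefCount_append]
  have hx : prefCount ((R.take t).map (ext1 M)) (a + M) a = 0 :=
    prefCount_map_false (fun ρ hρ => by
      have hρR := hperm ρ (List.take_subset t R hρ)
      rw [(row_idx hρR h1 h2).1, (row_idx hρR h1 h2).2.1]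
      omega)
  have hy : prefCount ((R.drop t).map (ext2 M)) (a + M) a = (R.drop t).length :=
    prefCount_map_true (fun ρ hρ => by
      have hρR := hperm ρ (List.drop_subset t R hρ)
      rw [(row_idx hρR h1 h2).2.2.1, (row_idx hρR h1 h2).2.2.2.1]
      omega)
  have hz : prefCount [vA M, vB M, itl M 1 M, dtl M M] (a + M) a = 2 := by
    rw [prefCount_cons, prefCount_cons, prefCount_cons, prefCount_cons, prefCount_nil,
      idx_vA_lo h1 h2, idx_vA_hi h1 h2, idx_vB_lo h1 h2, idx_vB_hi h1 h2,
      idx_itl_lo' h1 h2, idx_itl_hi' h1 h2, idx_dtl_lo' h1 h2, idx_dtl_hi' h1 h2]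
    rw [if_pos (by omega), if_pos (by omega), if_neg (by omega), if_neg (by omega)]
  rw [hx, hy, hz, List.length_drop]
  omega

include hperm in
lemma pcCross1 (ht : t ≤ R.length) {a c : ℕ} (h1 : 1 ≤ a) (h2 : a ≤ M) (h3 : 1 ≤ c) (h4 : c ≤ M)
    (hne : a ≠ c) : prefCount (nextR M t R) a (c + M) = t + 1 := by
  rw [nextR, prefCount_append, prefCount_append]
  have hx : prefCount ((R.take t).map (ext1 M)) a (c + M) = (R.take t).length :=
    prefCount_map_true (fun ρ hρ => by
      have hρR := hperm ρ (List.take_subset t R hρ)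
      have hia := (row_idx hρR h1 h2).2.2.2.2
      rw [(row_idx hρR h1 h2).1, (row_idx hρR h3 h4).2.1]
      omega)
  have hy : prefCount ((R.drop t).map (ext2 M)) a (c + M) = 0 :=
    prefCount_map_false (fun ρ hρ => by
      have hρR := hperm ρ (List.drop_subset t R hρ)
      have hic := (row_idx hρR h3 h4).2.2.2.2
      rw [(row_idx hρR h1 h2).2.2.1, (row_idx hρR h3 h4).2.2.2.1]
      omega)
  have hz : prefCount [vA M, vB M, itl M 1 M, dtl M M] a (c + M) = 1 := by
    rw [prefCount_cons, prefCount_cons, prefCount_cons, prefCount_cons, prefCount_nil,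
      idx_vA_lo h1 h2, idx_vA_hi h3 h4, idx_vB_lo h1 h2, idx_vB_hi h3 h4,
      idx_itl_lo' h1 h2, idx_itl_hi' h3 h4, idx_dtl_lo' h1 h2, idx_dtl_hi' h3 h4]
    rcases Nat.lt_or_ge a c with h | h
    · rw [if_neg (by omega), if_neg (by omega), if_pos (by omega), if_neg (by omega)]
    · rw [if_neg (by omega), if_neg (by omega), if_neg (by omega), if_pos (by omega)]
  rw [hx, hy, hz, List.length_take]
  omega

include hperm in
lemma pcCross2 (ht : t ≤ R.length) {a c : ℕ} (h1 : 1 ≤ a) (h2 : a ≤ M) (h3 : 1 ≤ c) (h4 : c ≤ M)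
    (hne : a ≠ c) : prefCount (nextR M t R) (c + M) a = (R.length - t) + 3 := by
  rw [nextR, prefCount_append, prefCount_append]
  have hx : prefCount ((R.take t).map (ext1 M)) (c + M) a = 0 :=
    prefCount_map_false (fun ρ hρ => by
      have hρR := hperm ρ (List.take_subset t R hρ)
      have hia := (row_idx hρR h1 h2).2.2.2.2
      rw [(row_idx hρR h1 h2).1, (row_idx hρR h3 h4).2.1]
      omega)
  have hy : prefCount ((R.drop t).map (ext2 M)) (c + M) a = (R.drop t).length :=
    prefCount_map_true (fun ρ hρ => by
      have hρR := hperm ρ (List.drop_subset t R hρ)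
      have hic := (row_idx hρR h3 h4).2.2.2.2
      rw [(row_idx hρR h1 h2).2.2.1, (row_idx hρR h3 h4).2.2.2.1]
      omega)
  have hz : prefCount [vA M, vB M, itl M 1 M, dtl M M] (c + M) a = 3 := by
    rw [prefCount_cons, prefCount_cons, prefCount_cons, prefCount_cons, prefCount_nil,
      idx_vA_lo h1 h2, idx_vA_hi h3 h4, idx_vB_lo h1 h2, idx_vB_hi h3 h4,
      idx_itl_lo' h1 h2, idx_itl_hi' h3 h4, idx_dtl_lo' h1 h2, idx_dtl_hi' h3 h4]
    rcases Nat.lt_or_ge a c with h | h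
    · rw [if_pos (by omega), if_pos (by omega), if_neg (by omega), if_pos (by omega)]
    · rw [if_pos (by omega), if_pos (by omega), if_pos (by omega), if_neg (by omega)]
  rw [hx, hy, hz, List.length_drop]
  omega

end claims

def Good (n : ℕ) : Prop :=
  ∃ R : List (List ℕ), R.length = 4*n - 3 ∧
    (∀ ρ ∈ R, ρ.Perm (List.range' 1 (2^n))) ∧
    ∀ i ∈ List.range' 1 (2^n), ∃ π : List ℕ, π.Perm (List.range' 1 (2^n)) ∧
      knockWinner n (fun a b => decide (prefCount R b a < prefCount R a b)) π = i

lemma map_shift_range' (M : ℕ) :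
    (List.range' 1 M).map (· + M) = List.range' (1 + M) M := by
  have : (fun x => x + M) = (fun x => M + x) := funext fun x => Nat.add_comm x M
  rw [this]
  have := List.map_add_range' (a := M) 1 M 1
  simpa [Nat.add_comm] using this

lemma range'_double (M : ℕ) :
    List.range' 1 (M + M) = List.range' 1 M ++ List.range' (1 + M) M := by
  rw [List.range'_append_1]

lemma step (n : ℕ) (hn : 3 ≤ n) (hg : Good n) : Good (n+1) := by
  obtain ⟨R, hlen, hperm, hwin⟩ := hg
  set M := 2^n with hMdef
  have hM2 : 2 ≤ M := by
    calc 2 = 2^1 := rfl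
    _ ≤ 2^n := Nat.pow_le_pow_right (by norm_num) (by omega)
  set t := 2*n - 1 with htdef
  have ht : t ≤ R.length := by omega
  have hpow : 2^(n+1) = M + M := by rw [pow_succ, hMdef]; ring
  have hrange : List.range' 1 (2^(n+1)) = List.range' 1 M ++ List.range' (1 + M) M := by
    rw [hpow, range'_double]
  refine ⟨nextR M t R, ?_, ?_, ?_⟩
  · -- length
    rw [nextR]
    simp only [List.length_append, List.length_map, List.length_take, List.length_drop,
      List.length_cons, List.length_nil, hlen]
    omega
  · -- rows are permutations
    intro ρ hρ
    rw [hrange]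
    rw [nextR] at hρ
    have hpermShift : ∀ σ : List ℕ, σ.Perm (List.range' 1 M) →
        (σ.map (· + M)).Perm (List.range' (1 + M) M) := fun σ hσ => by
      rw [← map_shift_range' M]
      exact hσ.map _
    rcases List.mem_append.1 hρ with h | h
    · obtain ⟨σ, hσ, rfl⟩ := List.mem_map.1 h
      have hσR := hperm σ (List.take_subset t R hσ)
      exact hσR.append (hpermShift σ hσR)
    rcases List.mem_append.1 h with h | h
    · obtain ⟨σ, hσ, rfl⟩ := List.mem_map.1 h
      have hσR := hperm σ (List.drop_subset t R hσ)
      exact (List.perm_append_comm).trans (hσR.append (hpermShift σ hσR))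
    have hascperm : (List.range' 1 M).Perm (List.range' 1 M) := List.Perm.refl _
    simp only [List.mem_cons, List.not_mem_nil, or_false] at h
    rcases h with rfl | rfl | rfl | rfl
    · exact (List.perm_append_comm).trans (hascperm.append (hpermShift _ hascperm))
    · exact (List.perm_append_comm).trans
        ((desc_perm M).append (hpermShift _ (desc_perm M)))
    · exact (itl_perm M M 1).trans ((List.Perm.refl _).append (hpermShift _ (List.Perm.refl _)))
    · exact (dtl_perm M M).trans ((List.Perm.refl _).append (hpermShift _ (List.Perm.refl _)))
  · -- every candidate can win
    intro i hi
    obtain ⟨hi1, hi2⟩ := mem_range''.1 hi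
    -- abbreviations
    have B1 : ∀ x ∈ List.range' 1 M, ∀ y ∈ List.range' 1 M,
        (fun a b => decide (prefCount (nextR M t R) b a < prefCount (nextR M t R) a b)) x y
          = (fun a b => decide (prefCount R b a < prefCount R a b)) x y := by
      intro x hx y hy
      obtain ⟨hx1, hx2⟩ := mem_range''.1 hx
      obtain ⟨hy1, hy2⟩ := mem_range''.1 hy
      rcases eq_or_ne x y with rfl | hne
      · simp
      · simp only
        rw [pcA hperm (by omega) (by omega) (by omega) (by omega) hne,
          pcA hperm (by omega) (by omega) (by omega) (by omega) (Ne.symm hne)]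
        exact decide_eq_decide.mpr (by omega)
    have B2 : ∀ x ∈ List.range' 1 M, ∀ y ∈ List.range' 1 M,
        (fun a b => decide (prefCount (nextR M t R) b a < prefCount (nextR M t R) a b)) (x + M) (y + M)
          = (fun a b => decide (prefCount R b a < prefCount R a b)) x y := by
      intro x hx y hy
      obtain ⟨hx1, hx2⟩ := mem_range''.1 hx
      obtain ⟨hy1, hy2⟩ := mem_range''.1 hy
      rcases eq_or_ne x y with rfl | hne
      · simp
      · simp only
        rw [pcB hperm (by omega) (by omega) (by omega) (by omega) hne,
          pcB hperm (by omega) (by omega) (by omega) (by omega) (Ne.symm hne)]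
        exact decide_eq_decide.mpr (by omega)
    have WA : ∀ a (π : List ℕ), π.Perm (List.range' 1 M) →
        knockWinner n (fun a b => decide (prefCount R b a < prefCount R a b)) π = a →
        (roundStep (fun a b => decide (prefCount (nextR M t R) b a < prefCount (nextR M t R) a b)))^[n] π = [a] := by
      intro a π hπ hw
      have hlπ : π.length = 2^n := by rw [hπ.length_eq, List.length_range']
      rw [iter_congr n π (fun x hx y hy => B1 x (hπ.subset hx) y (hπ.subset hy))]
      exact iter_winner hlπ hw
    have WB : ∀ c (π : List ℕ), π.Perm (List.range' 1 M) →
        knockWinner n (fun a b => decide (prefCount R b a < prefCount R a b)) π = c →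
        (roundStep (fun a b => decide (prefCount (nextR M t R) b a < prefCount (nextR M t R) a b)))^[n] (π.map (· + M)) = [c + M] := by
      intro c π hπ hw
      have hlπ : π.length = 2^n := by rw [hπ.length_eq, List.length_range']
      rw [iter_map n π (fun x hx y hy => B2 x (hπ.subset hx) y (hπ.subset hy)),
        iter_winner hlπ hw]
      rfl
    have hbrperm : ∀ (π σ : List ℕ), π.Perm (List.range' 1 M) → σ.Perm (List.range' 1 M) →
        (π ++ σ.map (· + M)).Perm (List.range' 1 (2^(n+1))) := by
      intro π σ hπ hσ
      rw [hrange]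
      exact hπ.append ((hσ.map _).trans (by rw [map_shift_range' M]))
    have hlen2 : ∀ (π : List ℕ), π.Perm (List.range' 1 M) → π.length = 2^n := by
      intro π hπ; rw [hπ.length_eq, List.length_range']
    by_cases hcase : i ≤ M
    · -- i in the first half
      obtain ⟨π, hπ, hwπ⟩ := hwin i (mem_range''.2 ⟨hi1, by omega⟩)
      refine ⟨π ++ π.map (· + M), hbrperm π π hπ hπ, ?_⟩
      rw [knockWinner, Function.iterate_succ_apply',
        iter_append _ n _ _ (hlen2 π hπ) (by rw [List.length_map]; exact hlen2 π hπ),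
        WA i π hπ hwπ, WB i π hπ hwπ]
      have hb : (decide (prefCount (nextR M t R) (i + M) i < prefCount (nextR M t R) i (i + M))) = true := by
        rw [pcPart1 hperm ht (by omega) (by omega), pcPart2 hperm ht (by omega) (by omega)]
        exact decide_eq_true (by omega)
      show (roundStep _ [i, i + M]).headI = i
      rw [roundStep_cons, roundStep_nil]
      rw [hb]
      rfl
    · -- i in the second half
      push_neg at hcase
      set c := i - M with hcdef
      have hceq : i = c + M := by omega
      have hc1 : 1 ≤ c := by omega
      have hc2 : c ≤ M := by rw [hpow] at hi2; omega
      set a0 := if c = 1 then 2 else 1 with ha0def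
      have ha01 : 1 ≤ a0 := by rw [ha0def]; split <;> omega
      have ha02 : a0 ≤ M := by rw [ha0def]; split <;> omega
      have ha0ne : a0 ≠ c := by rw [ha0def]; split <;> omega
      obtain ⟨π₁, hπ₁, hwπ₁⟩ := hwin a0 (mem_range''.2 ⟨ha01, by omega⟩)
      obtain ⟨π₂, hπ₂, hwπ₂⟩ := hwin c (mem_range''.2 ⟨hc1, by omega⟩)
      refine ⟨π₁ ++ π₂.map (· + M), hbrperm π₁ π₂ hπ₁ hπ₂, ?_⟩
      rw [knockWinner, Function.iterate_succ_apply',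
        iter_append _ n _ _ (hlen2 π₁ hπ₁) (by rw [List.length_map]; exact hlen2 π₂ hπ₂),
        WA a0 π₁ hπ₁ hwπ₁, WB c π₂ hπ₂ hwπ₂]
      have hb : (decide (prefCount (nextR M t R) (c + M) a0 < prefCount (nextR M t R) a0 (c + M))) = false := by
        rw [pcCross1 hperm ht (by omega) (by omega) (by omega) (by omega) ha0ne,
          pcCross2 hperm ht (by omega) (by omega) (by omega) (by omega) ha0ne]
        exact decide_eq_false (by omega)
      show (roundStep _ [a0, c + M]).headI = i
      rw [roundStep_cons, roundStep_nil]
      rw [hb, hceq]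
      rfl

def R3 : List (List ℕ) :=
  [[2, 1, 4, 5, 6, 3, 7, 8], [4, 1, 6, 3, 8, 5, 2, 7], [3, 8, 5, 7, 2, 4, 6, 1],
   [8, 7, 3, 1, 6, 2, 4, 5], [7, 2, 6, 8, 1, 3, 4, 5], [3, 2, 6, 5, 8, 4, 7, 1],
   [4, 1, 5, 7, 8, 2, 6, 3], [6, 1, 5, 7, 2, 3, 8, 4], [5, 6, 8, 4, 7, 1, 2, 3]]

lemma base : Good 3 := by
  refine ⟨R3, by decide, by decide, ?_⟩
  intro i hi
  have hi' : i = 1 ∨ i = 2 ∨ i = 3 ∨ i = 4 ∨ i = 5 ∨ i = 6 ∨ i = 7 ∨ i = 8 := by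
    have := mem_range''.1 hi
    omega
  rcases hi' with rfl | rfl | rfl | rfl | rfl | rfl | rfl | rfl
  · exact ⟨[1, 3, 2, 6, 5, 7, 8, 4], by decide, by decide⟩
  · exact ⟨[2, 3, 4, 1, 6, 5, 8, 7], by decide, by decide⟩
  · exact ⟨[3, 5, 4, 1, 8, 7, 2, 6], by decide, by decide⟩
  · exact ⟨[4, 1, 7, 3, 5, 8, 2, 6], by decide, by decide⟩
  · exact ⟨[5, 7, 8, 1, 2, 3, 6, 4], by decide, by decide⟩
  · exact ⟨[6, 3, 1, 2, 4, 7, 5, 8], by decide, by decide⟩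
  · exact ⟨[7, 1, 2, 6, 3, 4, 5, 8], by decide, by decide⟩
  · exact ⟨[8, 1, 2, 6, 4, 5, 7, 3], by decide, by decide⟩

lemma good_of_le (n : ℕ) (hn : 3 ≤ n) : Good n := by
  induction n, hn using Nat.le_induction with
  | base => exact base
  | succ n hn ih => exact step n hn ih

end KO

/-- For every `n ≥ 3` there is a voting profile with exactly `4n - 3` voters on the
candidate set `{1,…,2^n}` such that every candidate wins the single-elimination
knockout tournament (each challenge decided by majority) for a suitable bracket. -/
theorem stmt9 (n : ℕ) (hn : 3 ≤ n) :
    ∃ R : List (List ℕ), R.length = 4*n - 3 ∧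
      (∀ ρ ∈ R, ρ.Perm (List.range' 1 (2^n))) ∧
      ∀ i ∈ List.range' 1 (2^n), ∃ π : List ℕ, π.Perm (List.range' 1 (2^n)) ∧
        knockWinner n (fun a b => decide (prefCount R b a < prefCount R a b)) π = i :=
  KO.good_of_le n hn
end

section
/- Let X and Y be independent random variables with X ~ Poisson(λ) and Y ~ Poisson(μ), where 0 < μ < λ. Then P(X ≤ Y) ≤ exp(−(λ + μ − 2√(λμ))) = exp(−(√λ − √μ)²). -/
private lemma tsum_exp_aux (x : ℝ) : ∑' n : ℕ, x ^ n / n.factorial = Real.exp x := by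
  rw [Real.exp_eq_exp_ℝ, NormedSpace.exp_eq_tsum_div]

open MeasureTheory in
/-- Chernoff bound for the difference of independent Poisson random variables:
if `X ~ Poi(λ)`, `Y ~ Poi(μ)` are independent with `0 < μ < λ`, then
`P(X ≤ Y) ≤ exp(-(λ + μ - 2√(λμ)))`, and this bound equals `exp(-(√λ - √μ)²)`. -/
theorem stmt10 {Ω : Type*} [MeasurableSpace Ω] (P : Measure Ω) [IsProbabilityMeasure P]
    (lam mu : ℝ) (hmu : 0 < mu) (hlm : mu < lam)
    (X Y : Ω → ℕ) (hX : Measurable X) (hY : Measurable Y)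
    (hindep : ProbabilityTheory.IndepFun X Y P)
    (hXp : ∀ k : ℕ, P {ω | X ω = k}
      = ENNReal.ofReal (Real.exp (-lam) * lam ^ k / (Nat.factorial k)))
    (hYp : ∀ k : ℕ, P {ω | Y ω = k}
      = ENNReal.ofReal (Real.exp (-mu) * mu ^ k / (Nat.factorial k))) :
    P {ω | X ω ≤ Y ω}
      ≤ ENNReal.ofReal (Real.exp (-(lam + mu - 2 * Real.sqrt (lam * mu)))) ∧
    Real.exp (-(lam + mu - 2 * Real.sqrt (lam * mu)))
      = Real.exp (-(Real.sqrt lam - Real.sqrt mu)^2) := by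
  have hlam : (0 : ℝ) < lam := hmu.trans hlm
  -- the second part: algebraic identity
  have hsqrt : Real.sqrt lam * Real.sqrt mu = Real.sqrt (lam * mu) :=
    (Real.sqrt_mul hlam.le mu).symm
  have halg : Real.exp (-(lam + mu - 2 * Real.sqrt (lam * mu)))
      = Real.exp (-(Real.sqrt lam - Real.sqrt mu)^2) := by
    congr 1
    have h1 : Real.sqrt lam ^ 2 = lam := Real.sq_sqrt hlam.le
    have h2 : Real.sqrt mu ^ 2 = mu := Real.sq_sqrt hmu.le
    nlinarith [hsqrt, h1, h2]
  refine ⟨?_, halg⟩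
  -- parameters
  set t : ℝ := Real.sqrt (lam / mu) with ht_def
  set s : ℝ := Real.sqrt (mu / lam) with hs_def
  have hs_pos : 0 < s := Real.sqrt_pos.mpr (div_pos hmu hlam)
  have ht_pos : 0 < t := Real.sqrt_pos.mpr (div_pos hlam hmu)
  have ht1 : 1 ≤ t := by
    rw [ht_def, show (1:ℝ) = Real.sqrt 1 by simp]
    exact Real.sqrt_le_sqrt ((one_le_div hmu).mpr hlm.le)
  have hst : s * t = 1 := by
    rw [hs_def, ht_def, ← Real.sqrt_mul (div_pos hmu hlam).le,
      div_mul_div_comm, mul_comm mu lam, div_self (by positivity), Real.sqrt_one]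
  have hl2 : Real.sqrt lam * Real.sqrt lam = lam := Real.mul_self_sqrt hlam.le
  have hm2 : Real.sqrt mu * Real.sqrt mu = mu := Real.mul_self_sqrt hmu.le
  have hslam_pos : 0 < Real.sqrt lam := Real.sqrt_pos.mpr hlam
  have hsmu_pos : 0 < Real.sqrt mu := Real.sqrt_pos.mpr hmu
  have hlams : lam * s = Real.sqrt (lam * mu) := by
    rw [hs_def, Real.sqrt_div hmu.le, ← hsqrt]
    field_simp
    linear_combination (-1 : ℝ) * hl2
  have hmut : mu * t = Real.sqrt (lam * mu) := by
    rw [ht_def, Real.sqrt_div hlam.le, ← hsqrt]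
    field_simp
    linear_combination (-1 : ℝ) * hm2
  -- probabilities
  set p : ℕ → ℝ := fun j => Real.exp (-lam) * lam ^ j / j.factorial with hp_def
  set q : ℕ → ℝ := fun k => Real.exp (-mu) * mu ^ k / k.factorial with hq_def
  have hp_nonneg : ∀ j, 0 ≤ p j := fun j => by positivity
  have hq_nonneg : ∀ k, 0 ≤ q k := fun k => by positivity
  -- constant C = ∑' j, p j * s ^ j = exp (√(λμ) - λ)
  set C : ℝ := Real.exp (Real.sqrt (lam * mu) - lam) with hC_def
  have hps_summable : Summable (fun j : ℕ => p j * s ^ j) := by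
    have : (fun j : ℕ => p j * s ^ j)
        = fun j : ℕ => Real.exp (-lam) * ((lam * s) ^ j / j.factorial) := by
      funext j; simp only [hp_def, mul_pow]; ring
    rw [this]
    exact (Real.summable_pow_div_factorial (lam * s)).mul_left _
  have hps_sum : ∑' j : ℕ, p j * s ^ j = C := by
    have h1 : (fun j : ℕ => p j * s ^ j)
        = fun j : ℕ => Real.exp (-lam) * ((lam * s) ^ j / j.factorial) := by
      funext j; simp only [hp_def, mul_pow]; ring
    rw [h1, tsum_mul_left, tsum_exp_aux, hC_def, hlams, ← Real.exp_add]
    ring_nf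
  have hC_pos : 0 < C := Real.exp_pos _
  -- bound on partial sums of p
  have hS_le : ∀ k : ℕ, ∑ j ∈ Finset.range (k + 1), p j ≤ t ^ k * C := by
    intro k
    have step1 : ∀ j ∈ Finset.range (k + 1), p j ≤ t ^ k * (p j * s ^ j) := by
      intro j hj
      have hjk : j ≤ k := Nat.lt_succ_iff.mp (Finset.mem_range.mp hj)
      have : t ^ k * s ^ j = t ^ (k - j) := by
        have : t ^ k = t ^ (k - j) * t ^ j := by rw [← pow_add, Nat.sub_add_cancel hjk]
        rw [this, mul_assoc, ← mul_pow, mul_comm t s, hst, one_pow, mul_one]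
      calc p j = 1 * p j := (one_mul _).symm
        _ ≤ t ^ (k - j) * p j := by
            exact mul_le_mul_of_nonneg_right (one_le_pow₀ ht1) (hp_nonneg j)
        _ = t ^ k * (p j * s ^ j) := by rw [← this]; ring
    calc ∑ j ∈ Finset.range (k + 1), p j
        ≤ ∑ j ∈ Finset.range (k + 1), t ^ k * (p j * s ^ j) :=
          Finset.sum_le_sum step1
      _ = t ^ k * ∑ j ∈ Finset.range (k + 1), p j * s ^ j := by rw [Finset.mul_sum]
      _ ≤ t ^ k * C := by
          refine mul_le_mul_of_nonneg_left ?_ (by positivity)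
          rw [← hps_sum]
          exact Summable.sum_le_tsum _ (fun j _ => by positivity) hps_summable
  -- the dominating sequence g
  set g : ℕ → ℝ := fun k => t ^ k * C * q k with hg_def
  have hg_nonneg : ∀ k, 0 ≤ g k := fun k => by
    have := hq_nonneg k; positivity
  have hg_summable : Summable g := by
    have : g = fun k : ℕ => C * Real.exp (-mu) * ((mu * t) ^ k / k.factorial) := by
      funext k; simp only [hg_def, hq_def, mul_pow]; ring
    rw [this]
    exact (Real.summable_pow_div_factorial (mu * t)).mul_left _
  have hg_sum : ∑' k : ℕ, g k = Real.exp (-(lam + mu - 2 * Real.sqrt (lam * mu))) := by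
    have h1 : g = fun k : ℕ => C * Real.exp (-mu) * ((mu * t) ^ k / k.factorial) := by
      funext k; simp only [hg_def, hq_def, mul_pow]; ring
    rw [h1, tsum_mul_left, tsum_exp_aux, hC_def, hmut, ← Real.exp_add, ← Real.exp_add]
    ring_nf
  -- measure-theoretic part
  have hsub : {ω | X ω ≤ Y ω} ⊆ ⋃ k : ℕ, X ⁻¹' Set.Iic k ∩ Y ⁻¹' {k} := by
    intro ω hω
    exact Set.mem_iUnion.mpr ⟨Y ω, hω, rfl⟩
  have hstep : ∀ k : ℕ, P (X ⁻¹' Set.Iic k ∩ Y ⁻¹' {k}) ≤ ENNReal.ofReal (g k) := by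
    intro k
    have hmul : P (X ⁻¹' Set.Iic k ∩ Y ⁻¹' {k})
        = P (X ⁻¹' Set.Iic k) * P (Y ⁻¹' {k}) :=
      hindep.measure_inter_preimage_eq_mul _ _ measurableSet_Iic (measurableSet_singleton k)
    have hIic : P (X ⁻¹' Set.Iic k) ≤ ENNReal.ofReal (∑ j ∈ Finset.range (k + 1), p j) := by
      have hcover : X ⁻¹' Set.Iic k ⊆ ⋃ j ∈ Finset.range (k + 1), X ⁻¹' {j} := by
        intro ω hω
        exact Set.mem_biUnion (Finset.mem_range.mpr (Nat.lt_succ_of_le hω)) rfl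
      calc P (X ⁻¹' Set.Iic k) ≤ ∑ j ∈ Finset.range (k + 1), P (X ⁻¹' {j}) :=
            (measure_mono hcover).trans (measure_biUnion_finset_le _ _)
        _ = ∑ j ∈ Finset.range (k + 1), ENNReal.ofReal (p j) := by
            refine Finset.sum_congr rfl fun j _ => ?_
            have : X ⁻¹' {j} = {ω | X ω = j} := rfl
            rw [this, hXp j]
        _ = ENNReal.ofReal (∑ j ∈ Finset.range (k + 1), p j) :=
            (ENNReal.ofReal_sum_of_nonneg (fun j _ => hp_nonneg j)).symm
    have hYk : P (Y ⁻¹' {k}) = ENNReal.ofReal (q k) := by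
      have : Y ⁻¹' {k} = {ω | Y ω = k} := rfl
      rw [this, hYp k]
    rw [hmul, hYk]
    calc P (X ⁻¹' Set.Iic k) * ENNReal.ofReal (q k)
        ≤ ENNReal.ofReal (∑ j ∈ Finset.range (k + 1), p j) * ENNReal.ofReal (q k) :=
          mul_le_mul_left hIic _
      _ = ENNReal.ofReal ((∑ j ∈ Finset.range (k + 1), p j) * q k) := by
          rw [ENNReal.ofReal_mul (Finset.sum_nonneg fun j _ => hp_nonneg j)]
      _ ≤ ENNReal.ofReal (g k) := by
          apply ENNReal.ofReal_le_ofReal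
          simp only [hg_def]
          exact mul_le_mul_of_nonneg_right (hS_le k) (hq_nonneg k)
  calc P {ω | X ω ≤ Y ω}
      ≤ P (⋃ k : ℕ, X ⁻¹' Set.Iic k ∩ Y ⁻¹' {k}) := measure_mono hsub
    _ ≤ ∑' k : ℕ, P (X ⁻¹' Set.Iic k ∩ Y ⁻¹' {k}) := measure_iUnion_le _
    _ ≤ ∑' k : ℕ, ENNReal.ofReal (g k) := ENNReal.tsum_le_tsum hstep
    _ = ENNReal.ofReal (∑' k : ℕ, g k) :=
        (ENNReal.ofReal_tsum_of_nonneg hg_nonneg hg_summable).symm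
    _ = ENNReal.ofReal (Real.exp (-(lam + mu - 2 * Real.sqrt (lam * mu)))) := by
        rw [hg_sum]
end
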